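/- arXiv:1704.02728 — 7 statements merged into one kernel-verified Lean document; each statement's English description precedes it below -/
import Mathlib

section
/- Assume k and p are symmetric dispersal kernels, m, M ∈ C(Ω̄) are nonconstant, d, D, b, c > 0 and 0 < bc ≤ 1, and assume positive semi-trivial profiles u_d and v_D exist. If the stability index μ of (u_d,0) and the stability index ν of (0,v_D) satisfy μ ≤ 0 and ν ≤ 0, then μ = ν = 0, bc = 1, and b·u_d(x) = v_D(x) for every x ∈ Ω̄. Conversely, if bc = 1 and b·u_d = v_D on Ω̄, then μ = ν = 0. -/
open MeasureTheory Topology Filter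

noncomputable section

abbrev Pt (n : ℕ) := EuclideanSpace ℝ (Fin n)

def IsBoundedDomain {n : ℕ} (Ω : Set (Pt n)) : Prop :=
  IsOpen Ω ∧ IsConnected Ω ∧ Bornology.IsBounded Ω

def IsDispersalKernel {n : ℕ} (k : Pt n → Pt n → ℝ) : Prop :=
  Continuous (Function.uncurry k) ∧ (∀ x y, 0 ≤ k x y) ∧ (∀ x, 0 < k x x) ∧
  (∀ x, (∫ y, k x y) = 1) ∧ (∀ x, (∫ y, k y x) = 1)

def SymmKernel {n : ℕ} (k : Pt n → Pt n → ℝ) : Prop := ∀ x y, k x y = k y x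

def nlOp {n : ℕ} (Ω : Set (Pt n)) (k : Pt n → Pt n → ℝ) (φ : Pt n → ℝ) (x : Pt n) : ℝ :=
  (∫ y in Ω, k x y * φ y) - (∫ y in Ω, k y x) * φ x

def Nonconstant {n : ℕ} (Ω : Set (Pt n)) (m : Pt n → ℝ) : Prop :=
  ¬ ∃ a : ℝ, ∀ x ∈ closure Ω, m x = a

def SemiTrivialProfile {n : ℕ} (Ω : Set (Pt n)) (k : Pt n → Pt n → ℝ) (d : ℝ)
    (m u : Pt n → ℝ) : Prop :=
  ContinuousOn u (closure Ω) ∧ (∀ x ∈ closure Ω, 0 < u x) ∧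
  ∀ x ∈ closure Ω, d * nlOp Ω k u x + u x * (m x - u x) = 0

def stabIdx {n : ℕ} (Ω : Set (Pt n)) (p : Pt n → Pt n → ℝ) (D : ℝ) (q : Pt n → ℝ) : ℝ :=
  sSup {r : ℝ | ∃ ψ : Pt n → ℝ, MemLp ψ 2 (volume.restrict Ω) ∧
    ¬ ψ =ᵐ[volume.restrict Ω] (fun _ => (0:ℝ)) ∧
    r = (∫ x in Ω, (D * ψ x * nlOp Ω p ψ x + q x * ψ x ^ 2)) / (∫ x in Ω, ψ x ^ 2)}

def IsSteadyState {n : ℕ} (Ω : Set (Pt n)) (k p : Pt n → Pt n → ℝ)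
    (d D b c : ℝ) (m M u v : Pt n → ℝ) : Prop :=
  ContinuousOn u (closure Ω) ∧ ContinuousOn v (closure Ω) ∧
  (∀ x ∈ closure Ω, d * nlOp Ω k u x + u x * (m x - u x - c * v x) = 0) ∧
  (∀ x ∈ closure Ω, D * nlOp Ω p v x + v x * (M x - b * u x - v x) = 0)

def IsPositiveSteadyState {n : ℕ} (Ω : Set (Pt n)) (k p : Pt n → Pt n → ℝ)
    (d D b c : ℝ) (m M u v : Pt n → ℝ) : Prop :=
  IsSteadyState Ω k p d D b c m M u v ∧
  (∀ x ∈ closure Ω, 0 < u x) ∧ (∀ x ∈ closure Ω, 0 < v x)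

def IsBoundedClassicalSolution {n : ℕ} (Ω : Set (Pt n)) (k p : Pt n → Pt n → ℝ)
    (d D b c : ℝ) (m M : Pt n → ℝ) (u v : Pt n → ℝ → ℝ) : Prop :=
  ContinuousOn (fun q : Pt n × ℝ => u q.1 q.2) (closure Ω ×ˢ Set.Ici 0) ∧
  ContinuousOn (fun q : Pt n × ℝ => v q.1 q.2) (closure Ω ×ˢ Set.Ici 0) ∧
  (∃ C : ℝ, ∀ x ∈ closure Ω, ∀ t ≥ (0:ℝ), |u x t| ≤ C ∧ |v x t| ≤ C) ∧
  (∀ x ∈ closure Ω, ∀ t ≥ (0:ℝ), DifferentiableWithinAt ℝ (u x) (Set.Ici 0) t ∧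
      DifferentiableWithinAt ℝ (v x) (Set.Ici 0) t) ∧
  (∀ x ∈ closure Ω, ∀ t > (0:ℝ),
      HasDerivAt (u x)
        (d * nlOp Ω k (fun y => u y t) x + u x t * (m x - u x t - c * v x t)) t ∧
      HasDerivAt (v x)
        (D * nlOp Ω p (fun y => v y t) x + v x t * (M x - b * u x t - v x t)) t)


section Helpers

variable {n : ℕ} {Ω : Set (Pt n)}

lemma compact_cl (hΩb : Bornology.IsBounded Ω) : IsCompact (closure Ω) :=
  Metric.isCompact_of_isClosed_isBounded isClosed_closure hΩb.closure

lemma finite_restrict (hΩb : Bornology.IsBounded Ω) :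
    IsFiniteMeasure (volume.restrict Ω) := by
  constructor
  rw [Measure.restrict_apply_univ]
  exact lt_of_le_of_lt (measure_mono subset_closure) (compact_cl hΩb).measure_lt_top

lemma integrableOn_of_contOn (hΩb : Bornology.IsBounded Ω) {f : Pt n → ℝ}
    (hf : ContinuousOn f (closure Ω)) : IntegrableOn f Ω volume :=
  (hf.integrableOn_compact (compact_cl hΩb)).mono_set subset_closure

lemma memL2_of_contOn (hΩo : IsOpen Ω) (hΩb : Bornology.IsBounded Ω) {f : Pt n → ℝ}
    (hf : ContinuousOn f (closure Ω)) : MemLp f 2 (volume.restrict Ω) := by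
  haveI := finite_restrict hΩb
  obtain ⟨C, hC⟩ := (compact_cl hΩb).exists_bound_of_continuousOn hf
  exact MemLp.of_bound ((hf.mono subset_closure).aestronglyMeasurable hΩo.measurableSet) C
    ((ae_restrict_mem hΩo.measurableSet).mono fun x hx => hC x (subset_closure hx))

lemma integral_pos_of_pos (hΩo : IsOpen Ω) (hΩb : Bornology.IsBounded Ω)
    (hne : Ω.Nonempty) {f : Pt n → ℝ} (hf : ContinuousOn f (closure Ω))
    (hpos : ∀ x ∈ closure Ω, 0 < f x) : 0 < ∫ x in Ω, f x := by
  obtain ⟨x₀, hx₀, hmin⟩ := (compact_cl hΩb).exists_isMinOn hne.closure hf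
  have hε : 0 < f x₀ := hpos x₀ hx₀
  have hμ : 0 < (volume Ω).toReal := by
    refine ENNReal.toReal_pos (IsOpen.measure_pos volume hΩo hne).ne' ?_
    exact (lt_of_le_of_lt (measure_mono subset_closure)
      (compact_cl hΩb).measure_lt_top).ne
  calc (0:ℝ) < f x₀ * (volume Ω).toReal := by positivity
    _ ≤ ∫ x in Ω, f x := by
        exact setIntegral_ge_of_const_le_real hΩo.measurableSet
          (lt_of_le_of_lt (measure_mono subset_closure)
            (compact_cl hΩb).measure_lt_top).ne
          (fun x hx => hmin (subset_closure hx)) (integrableOn_of_contOn hΩb hf)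

lemma eq_zero_of_integral_nonpos (hΩo : IsOpen Ω) (hΩb : Bornology.IsBounded Ω)
    {f : Pt n → ℝ} (hf : ContinuousOn f (closure Ω)) (hnn : ∀ x ∈ Ω, 0 ≤ f x)
    (hint : ∫ x in Ω, f x ≤ 0) : ∀ x ∈ Ω, f x = 0 := by
  have hms := hΩo.measurableSet
  have hInt : IntegrableOn f Ω volume := integrableOn_of_contOn hΩb hf
  have hae : 0 ≤ᵐ[volume.restrict Ω] f := (ae_restrict_mem hms).mono fun x hx => hnn x hx
  have h0 : ∫ x in Ω, f x = 0 := le_antisymm hint (integral_nonneg_of_ae hae)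
  have hz : f =ᵐ[volume.restrict Ω] 0 := (setIntegral_eq_zero_iff_of_nonneg_ae hae hInt).1 h0
  intro x hx
  by_contra hne0
  have hxpos : 0 < f x := lt_of_le_of_ne (hnn x hx) (Ne.symm hne0)
  have hca : ContinuousAt f x := (hf.mono subset_closure).continuousAt (hΩo.mem_nhds hx)
  have hev : ∀ᶠ y in 𝓝 x, 0 < f y ∧ y ∈ Ω :=
    (continuousAt_const.eventually_lt hca hxpos).and (hΩo.eventually_mem hx)
  obtain ⟨U, hUsub, hUopen, hxU⟩ := eventually_nhds_iff.1 hev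
  have hU0 : volume.restrict Ω U = 0 := by
    refine measure_mono_null (fun y hy => ?_) (ae_iff.1 hz)
    exact (hUsub y hy).1.ne'
  have : volume.restrict Ω U = volume U := by
    rw [Measure.restrict_apply' hms, Set.inter_eq_self_of_subset_left
      (fun y hy => (hUsub y hy).2)]
  rw [this] at hU0
  exact (IsOpen.measure_pos volume hUopen ⟨x, hxU⟩).ne' hU0

lemma eqOn_closure_of_eqOn {f g : Pt n → ℝ} (hf : ContinuousOn f (closure Ω))
    (hg : ContinuousOn g (closure Ω)) (h : ∀ x ∈ Ω, f x = g x) :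
    ∀ x ∈ closure Ω, f x = g x := by
  intro x hx
  haveI : (𝓝[Ω] x).NeBot := mem_closure_iff_nhdsWithin_neBot.1 hx
  have h1 : Filter.Tendsto f (𝓝[Ω] x) (𝓝 (f x)) := (hf x hx).mono subset_closure
  have h2 : Filter.Tendsto g (𝓝[Ω] x) (𝓝 (g x)) := (hg x hx).mono subset_closure
  have h3 : Filter.Tendsto f (𝓝[Ω] x) (𝓝 (g x)) :=
    h2.congr' (eventually_nhdsWithin_of_forall fun y hy => (h y hy).symm)
  exact tendsto_nhds_unique h1 h3

lemma key_quad (hΩo : IsOpen Ω) (hΩb : Bornology.IsBounded Ω) (hne : Ω.Nonempty)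
    {p : Pt n → Pt n → ℝ} (hpc : Continuous (Function.uncurry p)) (hp0 : ∀ x y, 0 ≤ p x y)
    (hps : ∀ x y, p x y = p y x) {D : ℝ} (hD : 0 < D) {M v : Pt n → ℝ}
    (hv : ContinuousOn v (closure Ω)) (hvpos : ∀ x ∈ closure Ω, 0 < v x)
    (heq : ∀ x ∈ closure Ω, D * nlOp Ω p v x + v x * (M x - v x) = 0)
    {ψ : Pt n → ℝ} (hψm : StronglyMeasurable ψ) (hψ : MemLp ψ 2 (volume.restrict Ω)) :
    Integrable (fun x => D * ψ x * nlOp Ω p ψ x + (M x - v x) * ψ x ^ 2)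
      (volume.restrict Ω) ∧
    ∫ x in Ω, (D * ψ x * nlOp Ω p ψ x + (M x - v x) * ψ x ^ 2) ≤ 0 := by
  haveI := finite_restrict hΩb
  have hms := hΩo.measurableSet
  have hcl := compact_cl hΩb
  -- bounds
  obtain ⟨Cp, hCp⟩ := (hcl.prod hcl).exists_bound_of_continuousOn hpc.continuousOn
  have hCp' : ∀ x ∈ closure Ω, ∀ y ∈ closure Ω, p x y ≤ Cp := fun x hx y hy =>
    le_trans (le_abs_self _) (hCp (x, y) ⟨hx, hy⟩)
  obtain ⟨x₀, hx₀, hmin⟩ := hcl.exists_isMinOn hne.closure hv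
  set ε := v x₀ with hε
  have hεpos : 0 < ε := hvpos x₀ hx₀
  obtain ⟨Cv, hCv⟩ := hcl.exists_bound_of_continuousOn hv
  have hCv' : ∀ x ∈ closure Ω, v x ≤ Cv := fun x hx => le_trans (le_abs_self _) (hCv x hx)
  have hCv0 : 0 ≤ Cv := le_trans (hvpos x₀ hx₀).le (hCv' x₀ hx₀)
  have hψ1 : Integrable ψ (volume.restrict Ω) := hψ.integrable one_le_two
  have hψ2 : Integrable (fun x => ψ x ^ 2) (volume.restrict Ω) := hψ.integrable_sq
  -- the symmetrizable kernel function
  set H : Pt n × Pt n → ℝ :=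
    fun z => p z.1 z.2 * (ψ z.1 * ψ z.2 - v z.2 * ψ z.1 ^ 2 / v z.1) with hH
  set π : Measure (Pt n × Pt n) := (volume.restrict Ω).prod (volume.restrict Ω) with hπ
  have hvae : AEStronglyMeasurable v (volume.restrict Ω) :=
    (hv.mono subset_closure).aestronglyMeasurable hms
  have hv1 : AEStronglyMeasurable (fun z : Pt n × Pt n => v z.1) π :=
    hvae.comp_quasiMeasurePreserving Measure.quasiMeasurePreserving_fst
  have hv2 : AEStronglyMeasurable (fun z : Pt n × Pt n => v z.2) π :=
    hvae.comp_quasiMeasurePreserving Measure.quasiMeasurePreserving_snd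
  have hψ1m : AEStronglyMeasurable (fun z : Pt n × Pt n => ψ z.1) π :=
    hψm.aestronglyMeasurable.comp_quasiMeasurePreserving Measure.quasiMeasurePreserving_fst
  have hψ2m : AEStronglyMeasurable (fun z : Pt n × Pt n => ψ z.2) π :=
    hψm.aestronglyMeasurable.comp_quasiMeasurePreserving Measure.quasiMeasurePreserving_snd
  have hpm : AEStronglyMeasurable (fun z : Pt n × Pt n => p z.1 z.2) π :=
    (hpc.aestronglyMeasurable (μ := π))
  have hsq : AEStronglyMeasurable (fun z : Pt n × Pt n => ψ z.1 ^ 2) π := by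
    simpa [sq, Pi.mul_def] using hψ1m.mul hψ1m
  have hdivm : AEStronglyMeasurable (fun z : Pt n × Pt n => v z.2 * ψ z.1 ^ 2 / v z.1) π :=
    ((hv2.aemeasurable.mul hsq.aemeasurable).div hv1.aemeasurable).aestronglyMeasurable
  have hHm : AEStronglyMeasurable H π :=
    hpm.mul ((hψ1m.mul hψ2m).sub hdivm)
  -- integrability of H
  have hmaj : Integrable (fun z : Pt n × Pt n =>
      (Cp * |ψ z.1|) * |ψ z.2| + ((Cp * Cv / ε) * ψ z.1 ^ 2) * 1) π := by
    exact ((hψ1.abs.const_mul Cp).mul_prod hψ1.abs).add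
      ((hψ2.const_mul (Cp * Cv / ε)).mul_prod (integrable_const 1))
  have haeΩ : ∀ᵐ z ∂π, z ∈ Ω ×ˢ Ω := by
    rw [hπ, Measure.prod_restrict]
    exact ae_restrict_mem (hms.prod hms)
  have hCp0 : 0 ≤ Cp := le_trans (abs_nonneg _) (hCp (x₀, x₀) ⟨hx₀, hx₀⟩)
  have HInt : Integrable H π := by
    refine Integrable.mono' hmaj hHm (haeΩ.mono fun z hz => ?_)
    obtain ⟨h1, h2⟩ := hz
    have hc1 := subset_closure h1
    have hc2 := subset_closure h2
    have hv1p : 0 < v z.1 := hvpos _ hc1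
    have hv2p : 0 < v z.2 := hvpos _ hc2
    have hple : p z.1 z.2 ≤ Cp := hCp' _ hc1 _ hc2
    have hB : v z.2 * ψ z.1 ^ 2 / v z.1 ≤ (Cv / ε) * ψ z.1 ^ 2 := by
      have ha1 : v z.2 * ψ z.1 ^ 2 ≤ Cv * ψ z.1 ^ 2 :=
        mul_le_mul_of_nonneg_right (hCv' _ hc2) (sq_nonneg _)
      rw [div_mul_eq_mul_div, div_le_div_iff₀ hv1p hεpos]
      have hm' : ε ≤ v z.1 := hmin hc1
      nlinarith [mul_le_mul_of_nonneg_right ha1 hεpos.le,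
        mul_le_mul_of_nonneg_left hm' (mul_nonneg hCv0 (sq_nonneg (ψ z.1)))]
    have hB0 : 0 ≤ v z.2 * ψ z.1 ^ 2 / v z.1 :=
      div_nonneg (mul_nonneg hv2p.le (sq_nonneg _)) hv1p.le
    have habs : |ψ z.1 * ψ z.2 - v z.2 * ψ z.1 ^ 2 / v z.1|
        ≤ |ψ z.1| * |ψ z.2| + (Cv / ε) * ψ z.1 ^ 2 := by
      refine le_trans (abs_sub _ _) ?_
      rw [abs_mul]
      have : |v z.2 * ψ z.1 ^ 2 / v z.1| = v z.2 * ψ z.1 ^ 2 / v z.1 := abs_of_nonneg hB0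
      linarith
    have : ‖H z‖ = p z.1 z.2 * |ψ z.1 * ψ z.2 - v z.2 * ψ z.1 ^ 2 / v z.1| := by
      rw [hH]; simp only [Real.norm_eq_abs, abs_mul, abs_of_nonneg (hp0 z.1 z.2)]
    rw [this]
    calc p z.1 z.2 * |ψ z.1 * ψ z.2 - v z.2 * ψ z.1 ^ 2 / v z.1|
        ≤ Cp * (|ψ z.1| * |ψ z.2| + (Cv / ε) * ψ z.1 ^ 2) := by
          apply mul_le_mul hple habs (abs_nonneg _) hCp0
      _ = (Cp * |ψ z.1|) * |ψ z.2| + ((Cp * Cv / ε) * ψ z.1 ^ 2) * 1 := by ring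
  -- pointwise identity on Ω
  have hcongr : Set.EqOn (fun x => D * ψ x * nlOp Ω p ψ x + (M x - v x) * ψ x ^ 2)
      (fun x => D * ∫ y in Ω, H (x, y)) Ω := by
    intro x hx
    have hxc := subset_closure hx
    have hvx : 0 < v x := hvpos x hxc
    have hpxc : Continuous fun y => p x y := hpc.comp (Continuous.prodMk_right x)
    have hintψ : Integrable (fun y => p x y * ψ y) (volume.restrict Ω) := by
      refine Integrable.mono' (hψ1.abs.const_mul Cp)
        ((hpxc.aestronglyMeasurable).mul hψm.aestronglyMeasurable)
        ((ae_restrict_mem hms).mono fun y hy => ?_)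
      have hyc := subset_closure hy
      rw [Real.norm_eq_abs, abs_mul, abs_of_nonneg (hp0 x y)]
      exact mul_le_mul (hCp' x hxc y hyc) le_rfl (abs_nonneg _) hCp0
    have hintv : Integrable (fun y => p x y * v y) (volume.restrict Ω) :=
      integrableOn_of_contOn hΩb (hpxc.continuousOn.mul hv)
    have heqx := heq x hxc
    simp only [nlOp] at heqx
    have hMx : (M x - v x) * v x =
        D * (∫ y in Ω, p y x) * v x - D * (∫ y in Ω, p x y * v y) := by
      linear_combination heqx
    have hinner : (∫ y in Ω, H (x, y)) =
        ψ x * (∫ y in Ω, p x y * ψ y) - (ψ x ^ 2 / v x) * ∫ y in Ω, p x y * v y := by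
      rw [hH]
      have : (fun y => p x y * (ψ x * ψ y - v y * ψ x ^ 2 / v x))
          = fun y => ψ x * (p x y * ψ y) - (ψ x ^ 2 / v x) * (p x y * v y) := by
        funext y; field_simp
      simp only [this]
      rw [integral_sub (hintψ.const_mul _) (hintv.const_mul _),
        integral_const_mul, integral_const_mul]
    simp only [nlOp, hinner]
    have hcancel : ψ x ^ 2 / v x * v x = ψ x ^ 2 := div_mul_cancel₀ _ hvx.ne'
    have hkey : (D * ψ x * ((∫ y in Ω, p x y * ψ y) - (∫ y in Ω, p y x) * ψ x)
        + (M x - v x) * ψ x ^ 2) * v x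
        = (D * ((ψ x * ∫ y in Ω, p x y * ψ y)
          - (ψ x ^ 2 / v x) * ∫ y in Ω, p x y * v y)) * v x := by
      linear_combination ψ x ^ 2 * hMx + D * (∫ y in Ω, p x y * v y) * hcancel
    exact mul_right_cancel₀ hvx.ne' hkey
  have hg : Integrable (fun x => D * ∫ y in Ω, H (x, y)) (volume.restrict Ω) :=
    (HInt.integral_prod_left).const_mul D
  have haeq : (fun x => D * ψ x * nlOp Ω p ψ x + (M x - v x) * ψ x ^ 2)
      =ᵐ[volume.restrict Ω] (fun x => D * ∫ y in Ω, H (x, y)) :=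
    (ae_restrict_mem hms).mono fun x hx => hcongr hx
  constructor
  · exact hg.congr haeq.symm
  · rw [integral_congr_ae haeq, integral_const_mul]
    have hiter : (∫ x in Ω, ∫ y in Ω, H (x, y)) = ∫ z, H z ∂π := by
      have := MeasureTheory.integral_integral (μ := volume.restrict Ω)
        (ν := volume.restrict Ω) (f := fun x y => H (x, y)) HInt
      simpa using this
    rw [hiter]
    have hswap : Integrable (fun z : Pt n × Pt n => H z.swap) π := HInt.swap
    have hsum : (2:ℝ) * ∫ z, H z ∂π = ∫ z, (H z + H z.swap) ∂π := by
      rw [integral_add HInt hswap]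
      have : ∫ z, H z.swap ∂π = ∫ z, H z ∂π := integral_prod_swap H
      rw [this]; ring
    have hele : ∫ z, (H z + H z.swap) ∂π ≤ 0 := by
      refine integral_nonpos_of_ae (haeΩ.mono fun z hz => ?_)
      obtain ⟨h1, h2⟩ := hz
      show H z + H z.swap ≤ 0
      have hv1p : 0 < v z.1 := hvpos _ (subset_closure h1)
      have hv2p : 0 < v z.2 := hvpos _ (subset_closure h2)
      have hid : H z + H z.swap = -(p z.1 z.2 / (v z.1 * v z.2)) *
          (v z.2 * ψ z.1 - v z.1 * ψ z.2) ^ 2 := by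
        rw [hH]
        simp only [Prod.fst_swap, Prod.snd_swap]
        rw [hps z.2 z.1]
        field_simp
        ring
      rw [hid]
      apply mul_nonpos_of_nonpos_of_nonneg
      · simp only [neg_nonpos]
        exact div_nonneg (hp0 _ _) (mul_nonneg hv1p.le hv2p.le)
      · exact sq_nonneg _
    have hH0 : ∫ z, H z ∂π ≤ 0 := by linarith
    exact mul_nonpos_of_nonneg_of_nonpos hD.le hH0

/-- The Rayleigh quotient value of the positive eigenfunction `v` belongs to the set. -/
lemma mem_stab (hΩo : IsOpen Ω) (hΩb : Bornology.IsBounded Ω) (hne : Ω.Nonempty)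
    {p : Pt n → Pt n → ℝ} {D : ℝ} {M v q : Pt n → ℝ}
    (hv : ContinuousOn v (closure Ω)) (hvpos : ∀ x ∈ closure Ω, 0 < v x)
    (heq : ∀ x ∈ closure Ω, D * nlOp Ω p v x + v x * (M x - v x) = 0) :
    (∫ x in Ω, (q x - M x + v x) * v x ^ 2) / (∫ x in Ω, v x ^ 2) ∈
      {r : ℝ | ∃ ψ : Pt n → ℝ, MemLp ψ 2 (volume.restrict Ω) ∧
        ¬ ψ =ᵐ[volume.restrict Ω] (fun _ => (0:ℝ)) ∧
        r = (∫ x in Ω, (D * ψ x * nlOp Ω p ψ x + q x * ψ x ^ 2)) / (∫ x in Ω, ψ x ^ 2)} := by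
  have hpos2 : 0 < ∫ x in Ω, v x ^ 2 :=
    integral_pos_of_pos hΩo hΩb hne (hv.pow 2) fun x hx => pow_pos (hvpos x hx) 2
  refine ⟨v, memL2_of_contOn hΩo hΩb hv, ?_, ?_⟩
  · intro hae
    have : (∫ x in Ω, v x ^ 2) = 0 := by
      rw [integral_congr_ae (hae.mono fun x hx => by rw [hx])]
      simp
    exact hpos2.ne' this
  · congr 1
    refine setIntegral_congr_fun hΩo.measurableSet fun x hx => ?_
    have heqx := heq x (subset_closure hx)
    linear_combination (-(v x)) * heqx

/-- Every element of the stability set is bounded by `C` where `C` bounds the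
perturbation of the weight from the exact eigen-weight. -/
lemma stab_le (hΩo : IsOpen Ω) (hΩb : Bornology.IsBounded Ω) (hne : Ω.Nonempty)
    {p : Pt n → Pt n → ℝ} (hpc : Continuous (Function.uncurry p)) (hp0 : ∀ x y, 0 ≤ p x y)
    (hps : ∀ x y, p x y = p y x) {D : ℝ} (hD : 0 < D) {M v : Pt n → ℝ}
    (hv : ContinuousOn v (closure Ω)) (hvpos : ∀ x ∈ closure Ω, 0 < v x)
    (heq : ∀ x ∈ closure Ω, D * nlOp Ω p v x + v x * (M x - v x) = 0)
    {q : Pt n → ℝ} (hqc : ContinuousOn q (closure Ω)) (hMc : ContinuousOn M (closure Ω))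
    {C : ℝ} (hC : ∀ x ∈ Ω, |q x - (M x - v x)| ≤ C) {r : ℝ}
    (hr : r ∈ {r : ℝ | ∃ ψ : Pt n → ℝ, MemLp ψ 2 (volume.restrict Ω) ∧
        ¬ ψ =ᵐ[volume.restrict Ω] (fun _ => (0:ℝ)) ∧
        r = (∫ x in Ω, (D * ψ x * nlOp Ω p ψ x + q x * ψ x ^ 2)) / (∫ x in Ω, ψ x ^ 2)}) :
    r ≤ C := by
  haveI := finite_restrict hΩb
  have hms := hΩo.measurableSet
  obtain ⟨ψ, hψ, hψne, rfl⟩ := hr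
  set φ : Pt n → ℝ := (hψ.aestronglyMeasurable).mk ψ with hφdef
  have hφm : StronglyMeasurable φ := (hψ.aestronglyMeasurable).stronglyMeasurable_mk
  have haeφ : ψ =ᵐ[volume.restrict Ω] φ := (hψ.aestronglyMeasurable).ae_eq_mk
  have hφ : MemLp φ 2 (volume.restrict Ω) := hψ.ae_eq haeφ
  have hφne : ¬ φ =ᵐ[volume.restrict Ω] (fun _ => (0:ℝ)) := fun h => hψne (haeφ.trans h)
  have hφ2 : Integrable (fun x => φ x ^ 2) (volume.restrict Ω) := hφ.integrable_sq
  -- positivity of denominator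
  have hBnn : (0:ℝ) ≤ ∫ x in Ω, φ x ^ 2 := integral_nonneg fun x => sq_nonneg _
  have hBpos : 0 < ∫ x in Ω, φ x ^ 2 := by
    rcases hBnn.lt_or_eq with h | h
    · exact h
    · exfalso
      have hz : (fun x => φ x ^ 2) =ᵐ[volume.restrict Ω] 0 :=
        (setIntegral_eq_zero_iff_of_nonneg_ae (ae_of_all _ fun x => sq_nonneg (φ x)) hφ2).1
          h.symm
      exact hφne (hz.mono fun x hx => by
        have : φ x ^ 2 = 0 := hx
        simpa using pow_eq_zero_iff (n := 2) (by norm_num) |>.1 this)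
  -- transfer to the measurable representative
  have hinner : ∀ x, (∫ y in Ω, p x y * ψ y) = ∫ y in Ω, p x y * φ y := fun x =>
    integral_congr_ae (haeφ.mono fun y hy => by simp only [hy])
  have hden : (∫ x in Ω, ψ x ^ 2) = ∫ x in Ω, φ x ^ 2 :=
    integral_congr_ae (haeφ.mono fun x hx => by simp only [hx])
  have hnum : (∫ x in Ω, (D * ψ x * nlOp Ω p ψ x + q x * ψ x ^ 2))
      = ∫ x in Ω, (D * φ x * nlOp Ω p φ x + q x * φ x ^ 2) :=
    integral_congr_ae (haeφ.mono fun x hx => by simp only [nlOp, hinner x, hx])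
  rw [hnum, hden]
  obtain ⟨hInt1, hle1⟩ := key_quad hΩo hΩb hne hpc hp0 hps hD hv hvpos heq hφm hφ
  -- the perturbation term
  have hec : ContinuousOn (fun x => q x - (M x - v x)) (closure Ω) := hqc.sub (hMc.sub hv)
  have hInt2 : Integrable (fun x => (q x - (M x - v x)) * φ x ^ 2) (volume.restrict Ω) := by
    refine Integrable.mono' (hφ2.const_mul C)
      (((hec.mono subset_closure).aestronglyMeasurable hms).mul
        (hφm.aestronglyMeasurable.pow 2))
      ((ae_restrict_mem hms).mono fun x hx => ?_)
    rw [Real.norm_eq_abs, abs_mul, abs_of_nonneg (sq_nonneg (φ x))]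
    exact mul_le_mul_of_nonneg_right (hC x hx) (sq_nonneg _)
  have hle2 : (∫ x in Ω, (q x - (M x - v x)) * φ x ^ 2) ≤ C * ∫ x in Ω, φ x ^ 2 := by
    rw [← integral_const_mul]
    refine integral_mono_ae hInt2 (hφ2.const_mul C)
      ((ae_restrict_mem hms).mono fun x hx => ?_)
    exact mul_le_mul_of_nonneg_right (le_trans (le_abs_self _) (hC x hx)) (sq_nonneg _)
  have hsplit : (fun x => D * φ x * nlOp Ω p φ x + q x * φ x ^ 2)
      = fun x => (D * φ x * nlOp Ω p φ x + (M x - v x) * φ x ^ 2)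
        + (q x - (M x - v x)) * φ x ^ 2 := by
    funext x; ring
  rw [hsplit, integral_add hInt1 hInt2, div_le_iff₀ hBpos]
  calc (∫ x in Ω, (D * φ x * nlOp Ω p φ x + (M x - v x) * φ x ^ 2))
        + ∫ x in Ω, (q x - (M x - v x)) * φ x ^ 2
      ≤ 0 + C * ∫ x in Ω, φ x ^ 2 := add_le_add hle1 hle2
    _ = C * ∫ x in Ω, φ x ^ 2 := by ring


lemma div_nonpos_to (a b : ℝ) (hb : 0 < b) (h : a / b ≤ 0) : a ≤ 0 := by
  have h3 : a / b * b ≤ 0 := mul_nonpos_of_nonpos_of_nonneg h hb.le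
  have h2 : a / b * b = a := div_mul_cancel₀ a hb.ne'
  linarith

lemma stabIdx_ge (hΩo : IsOpen Ω) (hΩb : Bornology.IsBounded Ω) (hne : Ω.Nonempty)
    {p : Pt n → Pt n → ℝ} (hpc : Continuous (Function.uncurry p)) (hp0 : ∀ x y, 0 ≤ p x y)
    (hps : ∀ x y, p x y = p y x) {D : ℝ} (hD : 0 < D) {M v : Pt n → ℝ}
    (hv : ContinuousOn v (closure Ω)) (hvpos : ∀ x ∈ closure Ω, 0 < v x)
    (heq : ∀ x ∈ closure Ω, D * nlOp Ω p v x + v x * (M x - v x) = 0)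
    {q : Pt n → ℝ} (hqc : ContinuousOn q (closure Ω)) (hMc : ContinuousOn M (closure Ω)) :
    (∫ x in Ω, (q x - M x + v x) * v x ^ 2) / (∫ x in Ω, v x ^ 2)
      ≤ stabIdx Ω p D q := by
  obtain ⟨C, hC⟩ := (compact_cl hΩb).exists_bound_of_continuousOn (hqc.sub (hMc.sub hv))
  unfold stabIdx
  exact le_csSup ⟨C, fun r hr => stab_le hΩo hΩb hne hpc hp0 hps hD hv hvpos heq hqc hMc
      (fun x hx => by simpa [Real.norm_eq_abs] using hC x (subset_closure hx)) hr⟩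
    (mem_stab hΩo hΩb hne hv hvpos heq)

lemma stabIdx_eq_zero (hΩo : IsOpen Ω) (hΩb : Bornology.IsBounded Ω) (hne : Ω.Nonempty)
    {p : Pt n → Pt n → ℝ} (hpc : Continuous (Function.uncurry p)) (hp0 : ∀ x y, 0 ≤ p x y)
    (hps : ∀ x y, p x y = p y x) {D : ℝ} (hD : 0 < D) {M v : Pt n → ℝ}
    (hv : ContinuousOn v (closure Ω)) (hvpos : ∀ x ∈ closure Ω, 0 < v x)
    (heq : ∀ x ∈ closure Ω, D * nlOp Ω p v x + v x * (M x - v x) = 0)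
    {q : Pt n → ℝ} (hqc : ContinuousOn q (closure Ω)) (hMc : ContinuousOn M (closure Ω))
    (hq0 : ∀ x ∈ Ω, q x = M x - v x) :
    stabIdx Ω p D q = 0 := by
  have hub : ∀ r ∈ {r : ℝ | ∃ ψ : Pt n → ℝ, MemLp ψ 2 (volume.restrict Ω) ∧
      ¬ ψ =ᵐ[volume.restrict Ω] (fun _ => (0:ℝ)) ∧
      r = (∫ x in Ω, (D * ψ x * nlOp Ω p ψ x + q x * ψ x ^ 2)) / (∫ x in Ω, ψ x ^ 2)},
      r ≤ 0 := fun r hr =>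
    stab_le hΩo hΩb hne hpc hp0 hps hD hv hvpos heq hqc hMc (C := 0)
      (fun x hx => by rw [hq0 x hx]; simp) hr
  have hmem := mem_stab (q := q) (p := p) (D := D) hΩo hΩb hne hv hvpos heq
  have hval : (∫ x in Ω, (q x - M x + v x) * v x ^ 2) = 0 := by
    rw [setIntegral_congr_fun hΩo.measurableSet (g := fun _ => (0:ℝ))
      (fun x hx => by simp only [hq0 x hx]; ring)]
    simp
  rw [hval, zero_div] at hmem
  unfold stabIdx
  exact le_antisymm (Real.sSup_le hub le_rfl) (le_csSup ⟨0, hub⟩ hmem)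

end Helpers

theorem stmt_0 {n : ℕ} (Ω : Set (Pt n)) (hΩ : IsBoundedDomain Ω)
    (k p : Pt n → Pt n → ℝ)
    (hk : IsDispersalKernel k) (hp : IsDispersalKernel p)
    (hks : SymmKernel k) (hps : SymmKernel p)
    (m M : Pt n → ℝ)
    (hm : ContinuousOn m (closure Ω)) (hM : ContinuousOn M (closure Ω))
    (hmnc : Nonconstant Ω m) (hMnc : Nonconstant Ω M)
    (d D b c : ℝ) (hd : 0 < d) (hD : 0 < D) (hb : 0 < b) (hc : 0 < c)
    (hbc : b * c ≤ 1)
    (ud vD : Pt n → ℝ)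
    (hud : SemiTrivialProfile Ω k d m ud) (hvD : SemiTrivialProfile Ω p D M vD) :
    (stabIdx Ω p D (fun x => M x - b * ud x) ≤ 0 →
      stabIdx Ω k d (fun x => m x - c * vD x) ≤ 0 →
      stabIdx Ω p D (fun x => M x - b * ud x) = 0 ∧
      stabIdx Ω k d (fun x => m x - c * vD x) = 0 ∧
      b * c = 1 ∧ ∀ x ∈ closure Ω, b * ud x = vD x) ∧
    (b * c = 1 → (∀ x ∈ closure Ω, b * ud x = vD x) →
      stabIdx Ω p D (fun x => M x - b * ud x) = 0 ∧
      stabIdx Ω k d (fun x => m x - c * vD x) = 0) := by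
  
  obtain ⟨hΩo, hΩc, hΩb⟩ := hΩ
  have hne : Ω.Nonempty := hΩc.nonempty
  have hms : MeasurableSet Ω := hΩo.measurableSet
  obtain ⟨hpc, hp0, -, -, -⟩ := hp
  obtain ⟨hkc, hk0, -, -, -⟩ := hk
  obtain ⟨huc, hupos, hueq⟩ := hud
  obtain ⟨hvc, hvpos, hveq⟩ := hvD
  have hbu : ContinuousOn (fun x => b * ud x) (closure Ω) := continuousOn_const.mul huc
  have hcv : ContinuousOn (fun x => c * vD x) (closure Ω) := continuousOn_const.mul hvc
  have hq1 : ContinuousOn (fun x => M x - b * ud x) (closure Ω) := hM.sub hbu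
  have hq2 : ContinuousOn (fun x => m x - c * vD x) (closure Ω) := hm.sub hcv
  constructor
  · intro hμ hν
    have hgeμ := stabIdx_ge hΩo hΩb hne hpc hp0 hps hD hvc hvpos hveq hq1 hM
    have hgeν := stabIdx_ge hΩo hΩb hne hkc hk0 hks hd huc hupos hueq hq2 hm
    have hBv : 0 < ∫ x in Ω, vD x ^ 2 :=
      integral_pos_of_pos hΩo hΩb hne (hvc.pow 2) fun x hx => pow_pos (hvpos x hx) 2
    have hBu : 0 < ∫ x in Ω, ud x ^ 2 :=
      integral_pos_of_pos hΩo hΩb hne (huc.pow 2) fun x hx => pow_pos (hupos x hx) 2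
    have hA : (∫ x in Ω, (vD x - b * ud x) * vD x ^ 2) ≤ 0 := by
      have h := div_nonpos_to _ _ hBv (hgeμ.trans hμ)
      have heqfun : (∫ x in Ω, ((fun x => M x - b * ud x) x - M x + vD x) * vD x ^ 2)
          = ∫ x in Ω, (vD x - b * ud x) * vD x ^ 2 :=
        integral_congr_ae (ae_of_all _ fun x => by
          show (M x - b * ud x - M x + vD x) * vD x ^ 2 = _
          ring)
      rw [← heqfun]; exact h
    have hAu : (∫ x in Ω, (ud x - c * vD x) * ud x ^ 2) ≤ 0 := by
      have h := div_nonpos_to _ _ hBu (hgeν.trans hν)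
      have heqfun : (∫ x in Ω, ((fun x => m x - c * vD x) x - m x + ud x) * ud x ^ 2)
          = ∫ x in Ω, (ud x - c * vD x) * ud x ^ 2 :=
        integral_congr_ae (ae_of_all _ fun x => by
          show (m x - c * vD x - m x + ud x) * ud x ^ 2 = _
          ring)
      rw [← heqfun]; exact h
    have hfint : IntegrableOn (fun x => (vD x - b * ud x) * vD x ^ 2) Ω volume :=
      integrableOn_of_contOn hΩb ((hvc.sub hbu).mul (hvc.pow 2))
    have hgint : IntegrableOn (fun x => (b * ud x - vD x) * (b * ud x) ^ 2) Ω volume :=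
      integrableOn_of_contOn hΩb ((hbu.sub hvc).mul (hbu.pow 2))
    have hkint : IntegrableOn (fun x => b ^ 3 * ((ud x - c * vD x) * ud x ^ 2)) Ω volume :=
      integrableOn_of_contOn hΩb (continuousOn_const.mul ((huc.sub hcv).mul (huc.pow 2)))
    have hgle : (∫ x in Ω, (b * ud x - vD x) * (b * ud x) ^ 2)
        ≤ ∫ x in Ω, b ^ 3 * ((ud x - c * vD x) * ud x ^ 2) := by
      refine setIntegral_mono_on hgint hkint hms fun x hx => ?_
      have hvx := hvpos x (subset_closure hx)
      have hd5 : 0 ≤ b ^ 2 * ud x ^ 2 * vD x * (1 - b * c) :=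
        mul_nonneg (mul_nonneg (by positivity) hvx.le) (by linarith)
      nlinarith [hd5]
    have hgle2 : (∫ x in Ω, (b * ud x - vD x) * (b * ud x) ^ 2) ≤ 0 := by
      rw [integral_const_mul] at hgle
      nlinarith [pow_pos hb 3]
    have hsum : (∫ x in Ω, (vD x + b * ud x) * (vD x - b * ud x) ^ 2) ≤ 0 := by
      have hsplit : (∫ x in Ω, (vD x + b * ud x) * (vD x - b * ud x) ^ 2)
          = (∫ x in Ω, (vD x - b * ud x) * vD x ^ 2)
            + ∫ x in Ω, (b * ud x - vD x) * (b * ud x) ^ 2 := by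
        rw [← integral_add hfint hgint]
        exact integral_congr_ae (ae_of_all _ fun x => by ring)
      rw [hsplit]; linarith
    have hzero := eq_zero_of_integral_nonpos hΩo hΩb
      ((hvc.add hbu).mul ((hvc.sub hbu).pow 2))
      (fun x hx => by
        have h1 := hvpos x (subset_closure hx)
        have h2 := hupos x (subset_closure hx)
        show 0 ≤ (vD x + b * ud x) * (vD x - b * ud x) ^ 2
        exact mul_nonneg (by nlinarith [mul_pos hb h2]) (sq_nonneg _)) hsum
    have heqΩ : ∀ x ∈ Ω, b * ud x = vD x := by
      intro x hx
      have h0 := hzero x hx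
      have hvx := hvpos x (subset_closure hx)
      have hux := hupos x (subset_closure hx)
      have hsp : 0 < vD x + b * ud x := by positivity
      have hsq : (vD x - b * ud x) ^ 2 = 0 := by
        rcases mul_eq_zero.1 h0 with h | h
        · exact absurd h hsp.ne'
        · exact h
      have := pow_eq_zero_iff (two_ne_zero) |>.1 hsq
      linarith [this]
    have heqcl : ∀ x ∈ closure Ω, b * ud x = vD x :=
      eqOn_closure_of_eqOn hbu hvc heqΩ
    have hIu : 0 < ∫ x in Ω, ud x ^ 3 :=
      integral_pos_of_pos hΩo hΩb hne (huc.pow 3) fun x hx => pow_pos (hupos x hx) 3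
    have hAu2 : (1 - c * b) * ∫ x in Ω, ud x ^ 3 ≤ 0 := by
      have hcg : (∫ x in Ω, (ud x - c * vD x) * ud x ^ 2)
          = ∫ x in Ω, (1 - c * b) * ud x ^ 3 := by
        refine setIntegral_congr_fun hms fun x hx => ?_
        rw [← heqΩ x hx]; ring
      rw [hcg, integral_const_mul] at hAu
      exact hAu
    have hbc1 : b * c = 1 := by
      have h1 : 1 - c * b ≤ 0 := by nlinarith
      have hge1 : 1 ≤ b * c := by linarith [(mul_comm b c : b * c = c * b)]
      exact le_antisymm hbc hge1
    refine ⟨?_, ?_, hbc1, heqcl⟩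
    · exact stabIdx_eq_zero hΩo hΩb hne hpc hp0 hps hD hvc hvpos hveq hq1 hM
        fun x hx => by
          show M x - b * ud x = M x - vD x
          rw [heqΩ x hx]
    · refine stabIdx_eq_zero hΩo hΩb hne hkc hk0 hks hd huc hupos hueq hq2 hm
        fun x hx => ?_
      have hcb : c * vD x = ud x := by
        rw [← heqΩ x hx, ← mul_assoc, mul_comm c b, hbc1, one_mul]
      show m x - c * vD x = m x - ud x
      rw [hcb]
  · intro hbc1 heqcl
    constructor
    · exact stabIdx_eq_zero hΩo hΩb hne hpc hp0 hps hD hvc hvpos hveq hq1 hM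
        fun x hx => by
          show M x - b * ud x = M x - vD x
          rw [heqcl x (subset_closure hx)]
    · refine stabIdx_eq_zero hΩo hΩb hne hkc hk0 hks hd huc hupos hueq hq2 hm
        fun x hx => ?_
      have hcb : c * vD x = ud x := by
        rw [← heqcl x (subset_closure hx), ← mul_assoc, mul_comm c b, hbc1, one_mul]
      show m x - c * vD x = m x - ud x
      rw [hcb]
end
end

section
/- Let Ω ⊂ ℝⁿ be a nonempty bounded domain, let u, v ∈ C(Ω̄) with u(x) > 0 and v(x) > 0 for all x ∈ Ω̄, and let b, c > 0 be constants with bc ≤ 1. If ∫_Ω (v³ − b u v²) dx ≤ 0 and ∫_Ω (u³ − c v u²) dx ≤ 0, then ∫_Ω (b u − v)²(b u + v) dx ≤ 0; consequently b·u(x) = v(x) for every x ∈ Ω̄ and bc = 1. -/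
open MeasureTheory Topology Filter

noncomputable section

theorem stmt_1 {n : ℕ} (Ω : Set (Pt n)) (hΩ : IsBoundedDomain Ω)
    (u v : Pt n → ℝ) (hu : ContinuousOn u (closure Ω)) (hv : ContinuousOn v (closure Ω))
    (hupos : ∀ x ∈ closure Ω, 0 < u x) (hvpos : ∀ x ∈ closure Ω, 0 < v x)
    (b c : ℝ) (hb : 0 < b) (hc : 0 < c) (hbc : b * c ≤ 1)
    (h1 : (∫ x in Ω, (v x ^ 3 - b * u x * v x ^ 2)) ≤ 0)
    (h2 : (∫ x in Ω, (u x ^ 3 - c * v x * u x ^ 2)) ≤ 0) :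
    (∫ x in Ω, (b * u x - v x) ^ 2 * (b * u x + v x)) ≤ 0 ∧
    (∀ x ∈ closure Ω, b * u x = v x) ∧ b * c = 1 := by
  obtain ⟨hopen, hconn, hbdd⟩ := hΩ
  have hcomp : IsCompact (closure Ω) := hbdd.isCompact_closure
  have hmeas : MeasurableSet Ω := hopen.measurableSet
  have hInt : ∀ f : Pt n → ℝ, ContinuousOn f (closure Ω) → IntegrableOn f Ω := by
    intro f hf
    exact (hf.integrableOn_compact hcomp).mono_set subset_closure
  have hcu : ∀ x ∈ Ω, x ∈ closure Ω := fun x hx => subset_closure hx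
  have cW : ContinuousOn (fun x => (b * u x - v x) ^ 2 * (b * u x + v x)) (closure Ω) := by
    fun_prop
  have cA : ContinuousOn (fun x => u x ^ 3 - c * v x * u x ^ 2) (closure Ω) := by fun_prop
  have cB : ContinuousOn (fun x => v x ^ 3 - b * u x * v x ^ 2) (closure Ω) := by fun_prop
  have cR : ContinuousOn (fun x => b ^ 3 * (u x ^ 3 - c * v x * u x ^ 2)
      + (v x ^ 3 - b * u x * v x ^ 2)) (closure Ω) := by fun_prop
  have cU3 : ContinuousOn (fun x => u x ^ 3) (closure Ω) := by fun_prop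
  have iW := hInt _ cW
  have iA := hInt _ cA
  have iB := hInt _ cB
  have iR := hInt _ cR
  have iU3 := hInt _ cU3
  -- step 1: the integral inequality
  have key : (∫ x in Ω, (b * u x - v x) ^ 2 * (b * u x + v x)) ≤ 0 := by
    have hptwise : ∀ x ∈ Ω, (b * u x - v x) ^ 2 * (b * u x + v x)
        ≤ b ^ 3 * (u x ^ 3 - c * v x * u x ^ 2) + (v x ^ 3 - b * u x * v x ^ 2) := by
      intro x hx
      have hu0 := hupos x (hcu x hx)
      have hv0 := hvpos x (hcu x hx)
      nlinarith [mul_nonneg (mul_nonneg (mul_nonneg (sq_nonneg b) (sq_nonneg (u x))) hv0.le)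
        (sub_nonneg.mpr hbc), sq_nonneg (u x), mul_pos hu0 hv0]
    have h3 : (∫ x in Ω, (b * u x - v x) ^ 2 * (b * u x + v x))
        ≤ ∫ x in Ω, (b ^ 3 * (u x ^ 3 - c * v x * u x ^ 2)
            + (v x ^ 3 - b * u x * v x ^ 2)) :=
      setIntegral_mono_on iW iR hmeas hptwise
    have h4 : (∫ x in Ω, (b ^ 3 * (u x ^ 3 - c * v x * u x ^ 2)
        + (v x ^ 3 - b * u x * v x ^ 2)))
        = b ^ 3 * (∫ x in Ω, (u x ^ 3 - c * v x * u x ^ 2))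
          + ∫ x in Ω, (v x ^ 3 - b * u x * v x ^ 2) := by
      rw [integral_add (iA.const_mul _) iB, integral_const_mul]
    have hb3 : (0:ℝ) ≤ b ^ 3 := by positivity
    nlinarith [mul_nonpos_of_nonneg_of_nonpos hb3 h2]
  have hzeroΩ : ∀ x ∈ Ω, b * u x = v x := by
      by_contra hcon
      push_neg at hcon
      obtain ⟨x0, hx0, hne⟩ := hcon
      set W : Pt n → ℝ := fun x => (b * u x - v x) ^ 2 * (b * u x + v x) with hWdef
      have hWnn : 0 ≤ᵐ[volume.restrict Ω] W := by
        filter_upwards [ae_restrict_mem hmeas] with x hx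
        have hu0 := hupos x (hcu x hx)
        have hv0 := hvpos x (hcu x hx)
        have : 0 < b * u x + v x := by positivity
        positivity
      have hWcont : ContinuousOn W Ω := cW.mono subset_closure
      have hUopen : IsOpen (Ω ∩ W ⁻¹' {(0:ℝ)}ᶜ) :=
        hWcont.isOpen_inter_preimage hopen isOpen_compl_singleton
      have hWx0 : W x0 ≠ 0 := by
        have hu0 := hupos x0 (hcu x0 hx0)
        have hv0 := hvpos x0 (hcu x0 hx0)
        have h1' : (0:ℝ) < (b * u x0 - v x0) ^ 2 :=
          (sq_nonneg _).lt_of_ne (Ne.symm (pow_ne_zero 2 (sub_ne_zero_of_ne hne)))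
        have h2' : (0:ℝ) < b * u x0 + v x0 := by positivity
        exact ne_of_gt (mul_pos h1' h2')
      have hx0mem : x0 ∈ Ω ∩ W ⁻¹' {(0:ℝ)}ᶜ := ⟨hx0, hWx0⟩
      have hμU : 0 < volume (Ω ∩ W ⁻¹' {(0:ℝ)}ᶜ) :=
        hUopen.measure_pos volume ⟨x0, hx0mem⟩
      have hsub : Ω ∩ W ⁻¹' {(0:ℝ)}ᶜ ⊆ Function.support W ∩ Ω := by
        rintro x ⟨hxΩ, hxW⟩
        exact ⟨hxW, hxΩ⟩
      have hpos : 0 < ∫ x in Ω, W x := by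
        rw [setIntegral_pos_iff_support_of_nonneg_ae hWnn iW]
        exact lt_of_lt_of_le hμU (measure_mono hsub)
      exact absurd key (not_le.mpr hpos)
  refine ⟨key, ?_, ?_⟩
  · intro x hx
    have hg : ContinuousOn (fun y => b * u y - v y) (closure Ω) := by fun_prop
    have hnb : (𝓝[Ω] x).NeBot := mem_closure_iff_nhdsWithin_neBot.mp hx
    have ht1 : Tendsto (fun y => b * u y - v y) (𝓝[Ω] x) (𝓝 (b * u x - v x)) :=
      ((hg x hx).mono_left (nhdsWithin_mono x subset_closure))
    have ht2 : Tendsto (fun y => b * u y - v y) (𝓝[Ω] x) (𝓝 0) := by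
      apply Tendsto.congr' _ tendsto_const_nhds
      filter_upwards [self_mem_nhdsWithin] with y hy
      exact (sub_eq_zero.mpr (hzeroΩ y hy)).symm
    have := tendsto_nhds_unique ht1 ht2
    linarith
  -- step 3: b * c = 1
  · have heq : (∫ x in Ω, (u x ^ 3 - c * v x * u x ^ 2))
        = (1 - b * c) * ∫ x in Ω, u x ^ 3 := by
      rw [← integral_const_mul]
      apply setIntegral_congr_fun hmeas
      intro x hx
      have := hzeroΩ x hx
      simp only
      rw [← this]
      ring
    have hu3pos : 0 < ∫ x in Ω, u x ^ 3 := by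
      have hnn : 0 ≤ᵐ[volume.restrict Ω] fun x => u x ^ 3 := by
        filter_upwards [ae_restrict_mem hmeas] with x hx
        exact (pow_pos (hupos x (hcu x hx)) 3).le
      rw [setIntegral_pos_iff_support_of_nonneg_ae hnn iU3]
      have hsub : Ω ⊆ Function.support (fun x => u x ^ 3) ∩ Ω := by
        intro x hx
        exact ⟨ne_of_gt (pow_pos (hupos x (hcu x hx)) 3), hx⟩
      exact lt_of_lt_of_le (hopen.measure_pos volume hconn.nonempty) (measure_mono hsub)
    rw [heq] at h2
    have : 1 - b * c ≤ 0 := by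
      by_contra hcon
      push_neg at hcon
      nlinarith
    linarith
end
end

section
/- Let Ω ⊂ ℝⁿ be a nonempty bounded domain, let k : Ω̄ × Ω̄ → ℝ be continuous, nonnegative and symmetric (k(x,y) = k(y,x)), and let u, u* ∈ C(Ω̄) satisfy u(x) > u*(x) > 0 for all x ∈ Ω̄. Then ∫_Ω ∫_Ω k(x,y)(u*(x)u(y) − u(x)u*(y)) · (u(x) − u*(x))²/(u(x)u*(x)) dy dx = (1/2) ∫_Ω ∫_Ω k(x,y)(u*(x)u(y) − u(x)u*(y))² · (1/(u(x)u(y)) − 1/(u*(x)u*(y))) dy dx, and this quantity is ≤ 0. -/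
open MeasureTheory Topology Filter

noncomputable section

theorem stmt_2 {n : ℕ} (Ω : Set (Pt n)) (hΩ : IsBoundedDomain Ω)
    (k : Pt n → Pt n → ℝ)
    (hk : ContinuousOn (Function.uncurry k) (closure Ω ×ˢ closure Ω))
    (hknn : ∀ x ∈ closure Ω, ∀ y ∈ closure Ω, 0 ≤ k x y)
    (hksymm : ∀ x ∈ closure Ω, ∀ y ∈ closure Ω, k x y = k y x)
    (u us : Pt n → ℝ) (hu : ContinuousOn u (closure Ω)) (hus : ContinuousOn us (closure Ω))
    (hord : ∀ x ∈ closure Ω, us x < u x) (huspos : ∀ x ∈ closure Ω, 0 < us x) :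
    (∫ x in Ω, ∫ y in Ω,
        k x y * (us x * u y - u x * us y) * ((u x - us x) ^ 2 / (u x * us x)))
      = (1 / 2) * ∫ x in Ω, ∫ y in Ω,
        k x y * (us x * u y - u x * us y) ^ 2 *
          (1 / (u x * u y) - 1 / (us x * us y)) ∧
    (∫ x in Ω, ∫ y in Ω,
        k x y * (us x * u y - u x * us y) * ((u x - us x) ^ 2 / (u x * us x))) ≤ 0 := by
  obtain ⟨hopen, hconn, hbdd⟩ := hΩ
  have hmeas : MeasurableSet Ω := hopen.measurableSet
  have hsub : Ω ⊆ closure Ω := subset_closure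
  have hclcomp : IsCompact (closure Ω ×ˢ closure Ω) :=
    hbdd.isCompact_closure.prod hbdd.isCompact_closure
  set S : Set (Pt n × Pt n) := closure Ω ×ˢ closure Ω with hS
  set f : Pt n × Pt n → ℝ := fun p =>
    k p.1 p.2 * (us p.1 * u p.2 - u p.1 * us p.2) *
      ((u p.1 - us p.1) ^ 2 / (u p.1 * us p.1)) with hfdef
  set g : Pt n × Pt n → ℝ := fun p =>
    k p.1 p.2 * (us p.1 * u p.2 - u p.1 * us p.2) ^ 2 *
      (1 / (u p.1 * u p.2) - 1 / (us p.1 * us p.2)) with hgdef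
  -- continuity of components
  have hu1 : ContinuousOn (fun p : Pt n × Pt n => u p.1) S :=
    hu.comp continuous_fst.continuousOn (fun p hp => hp.1)
  have hu2 : ContinuousOn (fun p : Pt n × Pt n => u p.2) S :=
    hu.comp continuous_snd.continuousOn (fun p hp => hp.2)
  have hus1 : ContinuousOn (fun p : Pt n × Pt n => us p.1) S :=
    hus.comp continuous_fst.continuousOn (fun p hp => hp.1)
  have hus2 : ContinuousOn (fun p : Pt n × Pt n => us p.2) S :=
    hus.comp continuous_snd.continuousOn (fun p hp => hp.2)
  have hkc : ContinuousOn (fun p : Pt n × Pt n => k p.1 p.2) S := hk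
  have hupos : ∀ x ∈ closure Ω, 0 < u x := fun x hx => (huspos x hx).trans (hord x hx)
  have hfc : ContinuousOn f S := by
    apply ((hkc.mul ((hus1.mul hu2).sub (hu1.mul hus2))).mul
      (((hu1.sub hus1).pow 2).div (hu1.mul hus1) ?_))
    intro p hp
    exact (mul_pos (hupos p.1 hp.1) (huspos p.1 hp.1)).ne'
  have hgc : ContinuousOn g S := by
    apply ((hkc.mul (((hus1.mul hu2).sub (hu1.mul hus2)).pow 2)).mul
      ((continuousOn_const.div (hu1.mul hu2) ?_).sub
       (continuousOn_const.div (hus1.mul hus2) ?_)))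
    · intro p hp
      exact (mul_pos (hupos p.1 hp.1) (hupos p.2 hp.2)).ne'
    · intro p hp
      exact (mul_pos (huspos p.1 hp.1) (huspos p.2 hp.2)).ne'
  -- integrability
  have hΩΩsub : Ω ×ˢ Ω ⊆ S := Set.prod_mono hsub hsub
  have hfint : IntegrableOn f (Ω ×ˢ Ω) (volume.prod volume) := by
    exact (hfc.integrableOn_compact hclcomp).mono_set hΩΩsub
  have hgint : IntegrableOn g (Ω ×ˢ Ω) (volume.prod volume) := by
    exact (hgc.integrableOn_compact hclcomp).mono_set hΩΩsub
  have hfint' : Integrable (Function.uncurry fun x y => f (x, y))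
      ((volume.restrict Ω).prod (volume.restrict Ω)) := by
    rw [Measure.prod_restrict]; exact hfint
  have hgint' : Integrable (Function.uncurry fun x y => g (x, y))
      ((volume.restrict Ω).prod (volume.restrict Ω)) := by
    rw [Measure.prod_restrict]; exact hgint
  set μ2 := (volume.restrict Ω).prod (volume.restrict Ω) with hμ2
  -- swap integrability
  have hfswint : Integrable (fun p : Pt n × Pt n => f p.swap) μ2 := by
    have := hfint'.swap
    exact this
  -- key pointwise identity on Ω × Ω
  have hkey : ∀ p ∈ Ω ×ˢ Ω, f p + f p.swap = g p := by
    rintro ⟨x, y⟩ ⟨hx, hy⟩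
    have hx' := hsub hx; have hy' := hsub hy
    have ha : u x ≠ 0 := (hupos x hx').ne'
    have hb : us x ≠ 0 := (huspos x hx').ne'
    have hc : u y ≠ 0 := (hupos y hy').ne'
    have hd : us y ≠ 0 := (huspos y hy').ne'
    simp only [hfdef, hgdef, Prod.swap]
    rw [hksymm y hy' x hx']
    field_simp
    ring
  -- nonpositivity of g on Ω × Ω
  have hgnp : ∀ p ∈ Ω ×ˢ Ω, g p ≤ 0 := by
    rintro ⟨x, y⟩ ⟨hx, hy⟩
    have hx' := hsub hx; have hy' := hsub hy
    apply mul_nonpos_of_nonneg_of_nonpos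
    · exact mul_nonneg (hknn x hx' y hy') (sq_nonneg _)
    · rw [sub_nonpos]
      apply one_div_le_one_div_of_le (mul_pos (huspos x hx') (huspos y hy'))
      exact mul_le_mul (hord x hx').le (hord y hy').le (huspos y hy').le (hupos x hx').le
  -- translate iterated integrals
  have hI : (∫ x in Ω, ∫ y in Ω,
        k x y * (us x * u y - u x * us y) * ((u x - us x) ^ 2 / (u x * us x)))
      = ∫ p, f p ∂μ2 := by
    exact integral_integral hfint'
  have hJ : (∫ x in Ω, ∫ y in Ω,
        k x y * (us x * u y - u x * us y) ^ 2 *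
          (1 / (u x * u y) - 1 / (us x * us y)))
      = ∫ p, g p ∂μ2 := by
    exact integral_integral hgint'
  have hswap : ∫ p, f p.swap ∂μ2 = ∫ p, f p ∂μ2 := integral_prod_swap f
  have hmeas2 : MeasurableSet (Ω ×ˢ Ω) := hmeas.prod hmeas
  have hsum : ∫ p, (f p + f p.swap) ∂μ2 = ∫ p, g p ∂μ2 := by
    rw [hμ2, Measure.prod_restrict]
    apply setIntegral_congr_fun hmeas2 hkey
  have htwo : 2 * ∫ p, f p ∂μ2 = ∫ p, g p ∂μ2 := by
    have hfμ2 : Integrable f μ2 := by rw [hμ2, Measure.prod_restrict]; exact hfint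
    rw [← hsum, integral_add hfμ2 hfswint, hswap]
    ring
  have hgneg : ∫ p, g p ∂μ2 ≤ 0 := by
    rw [hμ2, Measure.prod_restrict]
    exact setIntegral_nonpos hmeas2 hgnp
  constructor
  · rw [hI, hJ, ← htwo]; ring
  · rw [hI]; linarith
end
end

section
/- Assume k and p are symmetric dispersal kernels, m, M ∈ C(Ω̄) are nonconstant, and d, D, b, c > 0. Let (u,v) and (u*,v*) be two positive steady states of the competition system with u(x) > u*(x) and v(x) < v*(x) for all x ∈ Ω̄, and set w = u − u*, z = v − v*. Then ∫_Ω (w + c z) w² dx ≤ 0 and ∫_Ω (b w + z) z² dx ≥ 0. -/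
open MeasureTheory Topology Filter

noncomputable section

namespace Stmt3Aux

lemma alg_key {a a' b b' : ℝ} (ha' : 0 < a') (hb' : 0 < b') (ha : a' < a) (hb : b' < b) :
    (b * a' - b' * a) * ((a - a')^2 / (a * a') - (b - b')^2 / (b * b')) ≤ 0 := by
  have ha0 : 0 < a := ha'.trans ha
  have hb0 : 0 < b := hb'.trans hb
  have key : (b * a' - b' * a) * ((a - a')^2 / (a * a') - (b - b')^2 / (b * b'))
      = -((a * b' - a' * b)^2 * (a * b - a' * b') / (a * a' * (b * b'))) := by
    field_simp
    ring
  rw [key, neg_nonpos]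
  have h1 : 0 ≤ a * b - a' * b' := by nlinarith
  positivity

lemma key_int {n : ℕ} (Ω : Set (Pt n)) (hΩo : IsOpen Ω) (hΩb : Bornology.IsBounded Ω)
    (k : Pt n → Pt n → ℝ) (hkc : Continuous (Function.uncurry k))
    (hk0 : ∀ x y, 0 ≤ k x y) (hks : SymmKernel k)
    (u us : Pt n → ℝ) (hu : ContinuousOn u (closure Ω)) (hus : ContinuousOn us (closure Ω))
    (huspos : ∀ x ∈ closure Ω, 0 < us x) (hord : ∀ x ∈ closure Ω, us x < u x) :
    (∫ x in Ω, ((u x - us x)^2 / (u x * us x)) *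
      (∫ y in Ω, k x y * (u y * us x - us y * u x))) ≤ 0 := by
  have hK : IsCompact (closure Ω) := hΩb.isCompact_closure
  have hmeas : MeasurableSet Ω := hΩo.measurableSet
  set g : Pt n → ℝ := fun x => (u x - us x)^2 / (u x * us x) with hg_def
  have hupos : ∀ x ∈ closure Ω, 0 < u x := fun x hx => (huspos x hx).trans (hord x hx)
  have hg : ContinuousOn g (closure Ω) := by
    apply ContinuousOn.div
    · exact (hu.sub hus).pow 2
    · exact hu.mul hus
    · intro x hx
      exact (mul_pos (hupos x hx) (huspos x hx)).ne'
  set H : Pt n × Pt n → ℝ :=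
    fun q => g q.1 * (k q.1 q.2 * (u q.2 * us q.1 - us q.2 * u q.1)) with hH_def
  have hmaps1 : Set.MapsTo Prod.fst (closure Ω ×ˢ closure Ω) (closure Ω) :=
    fun q hq => hq.1
  have hmaps2 : Set.MapsTo Prod.snd (closure Ω ×ˢ closure Ω) (closure Ω) :=
    fun q hq => hq.2
  have hHc : ContinuousOn H (closure Ω ×ˢ closure Ω) := by
    apply ContinuousOn.mul
    · exact hg.comp continuous_fst.continuousOn hmaps1
    · apply ContinuousOn.mul
      · exact hkc.continuousOn
      · exact ((hu.comp continuous_snd.continuousOn hmaps2).mul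
          (hus.comp continuous_fst.continuousOn hmaps1)).sub
          ((hus.comp continuous_snd.continuousOn hmaps2).mul
          (hu.comp continuous_fst.continuousOn hmaps1))
  have hHint : Integrable H ((volume.restrict Ω).prod (volume.restrict Ω)) := by
    rw [Measure.prod_restrict]
    exact (hHc.integrableOn_compact (hK.prod hK)).mono_set
      (Set.prod_mono subset_closure subset_closure)
  have hslice : ∀ x ∈ closure Ω, IntegrableOn (fun y => H (x, y)) Ω volume := by
    intro x hx
    have : ContinuousOn (fun y => H (x, y)) (closure Ω) :=
      hHc.comp (Continuous.continuousOn (by continuity)) (fun y hy => ⟨hx, hy⟩)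
    exact (this.integrableOn_compact hK).mono_set subset_closure
  have hslice' : ∀ x ∈ closure Ω, IntegrableOn (fun y => H (y, x)) Ω volume := by
    intro x hx
    have : ContinuousOn (fun y => H (y, x)) (closure Ω) :=
      hHc.comp (Continuous.continuousOn (by continuity)) (fun y hy => ⟨hy, hx⟩)
    exact (this.integrableOn_compact hK).mono_set subset_closure
  set T : ℝ := ∫ x in Ω, ∫ y in Ω, H (x, y) with hT_def
  have hgoal_eq : (∫ x in Ω, g x * (∫ y in Ω, k x y * (u y * us x - us y * u x))) = T := by
    apply setIntegral_congr_fun hmeas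
    intro x _
    simp only [H]
    rw [integral_const_mul]
  have hswap : T = ∫ x in Ω, ∫ y in Ω, H (y, x) :=
    integral_integral_swap (f := fun x y => H (x, y)) hHint
  have hTT : T + T = ∫ x in Ω, ((∫ y in Ω, H (x, y)) + (∫ y in Ω, H (y, x))) := by
    nth_rewrite 2 [hswap]
    have hA : Integrable (fun x => ∫ y in Ω, H (x, y)) (volume.restrict Ω) :=
      hHint.integral_prod_left
    have hB : Integrable (fun x => ∫ y in Ω, H (y, x)) (volume.restrict Ω) := by
      have := hHint.swap.integral_prod_left
      simpa [Function.comp] using this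
    rw [← integral_add hA hB]
  have hTT2 : T + T = ∫ x in Ω, ∫ y in Ω, (H (x, y) + H (y, x)) := by
    rw [hTT]
    apply setIntegral_congr_fun hmeas
    intro x hx
    exact (integral_add (hslice x (subset_closure hx)) (hslice' x (subset_closure hx))).symm
  have hsign : (∫ x in Ω, ∫ y in Ω, (H (x, y) + H (y, x))) ≤ 0 := by
    apply setIntegral_nonpos hmeas
    intro x hx
    apply setIntegral_nonpos hmeas
    intro y hy
    have hx' := subset_closure hx
    have hy' := subset_closure hy
    have heq : H (x, y) + H (y, x)
        = k x y * ((u y * us x - us y * u x) * (g x - g y)) := by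
      simp only [H]
      rw [hks y x]
      ring
    rw [heq]
    apply mul_nonpos_of_nonneg_of_nonpos (hk0 x y)
    exact alg_key (huspos x hx') (huspos y hy') (hord x hx') (hord y hy')
  rw [hgoal_eq]
  linarith [hTT2 ▸ hsign]

end Stmt3Aux

theorem stmt_3 {n : ℕ} (Ω : Set (Pt n)) (hΩ : IsBoundedDomain Ω)
    (k p : Pt n → Pt n → ℝ)
    (hk : IsDispersalKernel k) (hp : IsDispersalKernel p)
    (hks : SymmKernel k) (hps : SymmKernel p)
    (m M : Pt n → ℝ)
    (hm : ContinuousOn m (closure Ω)) (hM : ContinuousOn M (closure Ω))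
    (hmnc : Nonconstant Ω m) (hMnc : Nonconstant Ω M)
    (d D b c : ℝ) (hd : 0 < d) (hD : 0 < D) (hb : 0 < b) (hc : 0 < c)
    (u v us vs : Pt n → ℝ)
    (huv : IsPositiveSteadyState Ω k p d D b c m M u v)
    (husvs : IsPositiveSteadyState Ω k p d D b c m M us vs)
    (hord1 : ∀ x ∈ closure Ω, us x < u x) (hord2 : ∀ x ∈ closure Ω, v x < vs x) :
    (∫ x in Ω, ((u x - us x) + c * (v x - vs x)) * (u x - us x) ^ 2) ≤ 0 ∧
    0 ≤ (∫ x in Ω, (b * (u x - us x) + (v x - vs x)) * (v x - vs x) ^ 2) := by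
  obtain ⟨⟨huc, hvc, hequ, heqv⟩, hupos, hvpos⟩ := huv
  obtain ⟨⟨husc, hvsc, hequs, heqvs⟩, huspos, hvspos⟩ := husvs
  obtain ⟨hΩo, hΩconn, hΩb⟩ := hΩ
  obtain ⟨hkc, hk0, -, -, -⟩ := hk
  obtain ⟨hpc, hp0, -, -, -⟩ := hp
  have hK : IsCompact (closure Ω) := hΩb.isCompact_closure
  have hmeas : MeasurableSet Ω := hΩo.measurableSet
  have hint : ∀ (q : Pt n → Pt n → ℝ), Continuous (Function.uncurry q) →
      ∀ (f : Pt n → ℝ), ContinuousOn f (closure Ω) → ∀ x : Pt n,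
      IntegrableOn (fun y => q x y * f y) Ω volume := by
    intro q hqc f hf x
    have hc1 : ContinuousOn (fun y => q x y * f y) (closure Ω) := by
      apply ContinuousOn.mul _ hf
      exact (hqc.comp (continuous_const.prodMk continuous_id)).continuousOn
    exact (hc1.integrableOn_compact hK).mono_set subset_closure
  have hJ : ∀ (q : Pt n → Pt n → ℝ), Continuous (Function.uncurry q) →
      ∀ (f1 f2 : Pt n → ℝ), ContinuousOn f1 (closure Ω) → ContinuousOn f2 (closure Ω) →
      ∀ x : Pt n,
      (∫ y in Ω, q x y * (f1 y * f2 x - f2 y * f1 x))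
        = (∫ y in Ω, q x y * f1 y) * f2 x - (∫ y in Ω, q x y * f2 y) * f1 x := by
    intro q hqc f1 f2 h1 h2 x
    rw [← integral_mul_const, ← integral_mul_const,
      ← integral_sub ((hint q hqc f1 h1 x).mul_const _) ((hint q hqc f2 h2 x).mul_const _)]
    congr 1
    ext y
    ring
  constructor
  · -- first inequality
    have hpoint : ∀ x ∈ Ω,
        ((u x - us x) + c * (v x - vs x)) * (u x - us x) ^ 2
          = d * (((u x - us x)^2 / (u x * us x)) *
            (∫ y in Ω, k x y * (u y * us x - us y * u x))) := by
      intro x hx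
      have hx' : x ∈ closure Ω := subset_closure hx
      have e1 := hequ x hx'
      have e2 := hequs x hx'
      simp only [nlOp] at e1 e2
      rw [hJ k hkc u us huc husc x]
      have hne : u x * us x ≠ 0 := mul_ne_zero (hupos x hx').ne' (huspos x hx').ne'
      rw [div_mul_eq_mul_div, ← mul_div_assoc, eq_div_iff hne]
      linear_combination (u x * (u x - us x)^2) * e2 - (us x * (u x - us x)^2) * e1
    calc (∫ x in Ω, ((u x - us x) + c * (v x - vs x)) * (u x - us x) ^ 2)
        = d * ∫ x in Ω, ((u x - us x)^2 / (u x * us x)) *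
            (∫ y in Ω, k x y * (u y * us x - us y * u x)) := by
          rw [← integral_const_mul]
          exact setIntegral_congr_fun hmeas hpoint
      _ ≤ 0 := mul_nonpos_of_nonneg_of_nonpos hd.le
          (Stmt3Aux.key_int Ω hΩo hΩb k hkc hk0 hks u us huc husc huspos hord1)
  · -- second inequality
    have hpoint : ∀ x ∈ Ω,
        (b * (u x - us x) + (v x - vs x)) * (v x - vs x) ^ 2
          = -D * (((vs x - v x)^2 / (vs x * v x)) *
            (∫ y in Ω, p x y * (vs y * v x - v y * vs x))) := by
      intro x hx
      have hx' : x ∈ closure Ω := subset_closure hx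
      have e3 := heqv x hx'
      have e4 := heqvs x hx'
      simp only [nlOp] at e3 e4
      rw [hJ p hpc vs v hvsc hvc x]
      have hne : vs x * v x ≠ 0 := mul_ne_zero (hvspos x hx').ne' (hvpos x hx').ne'
      rw [div_mul_eq_mul_div, ← mul_div_assoc, eq_div_iff hne]
      linear_combination (v x * (vs x - v x)^2) * e4 - (vs x * (vs x - v x)^2) * e3
    have hkey := Stmt3Aux.key_int Ω hΩo hΩb p hpc hp0 hps vs v hvsc hvc hvpos hord2
    calc (0:ℝ) ≤ -D * ∫ x in Ω, ((vs x - v x)^2 / (vs x * v x)) *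
            (∫ y in Ω, p x y * (vs y * v x - v y * vs x)) := by nlinarith
      _ = ∫ x in Ω, (b * (u x - us x) + (v x - vs x)) * (v x - vs x) ^ 2 := by
          rw [← integral_const_mul]
          exact (setIntegral_congr_fun hmeas hpoint).symm
end
end

section
/- Let Ω ⊂ ℝⁿ be a nonempty bounded domain, let w, z ∈ C(Ω̄) with w(x) > 0 and z(x) < 0 for all x ∈ Ω̄, and let b, c > 0 be constants with bc ≤ 1. If ∫_Ω (w + c z) w² dx ≤ 0 and ∫_Ω (b w + z) z² dx ≥ 0, then ∫_Ω (w + c z)²(c z − w) dx ≥ 0; consequently bc = 1 and w(x) + c·z(x) = 0 for every x ∈ Ω̄. -/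
open MeasureTheory Topology Filter

noncomputable section

theorem stmt_4 {n : ℕ} (Ω : Set (Pt n)) (hΩ : IsBoundedDomain Ω)
    (w z : Pt n → ℝ) (hw : ContinuousOn w (closure Ω)) (hz : ContinuousOn z (closure Ω))
    (hwpos : ∀ x ∈ closure Ω, 0 < w x) (hzneg : ∀ x ∈ closure Ω, z x < 0)
    (b c : ℝ) (hb : 0 < b) (hc : 0 < c) (hbc : b * c ≤ 1)
    (h1 : (∫ x in Ω, (w x + c * z x) * w x ^ 2) ≤ 0)
    (h2 : 0 ≤ (∫ x in Ω, (b * w x + z x) * z x ^ 2)) :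
    0 ≤ (∫ x in Ω, (w x + c * z x) ^ 2 * (c * z x - w x)) ∧
    b * c = 1 ∧ (∀ x ∈ closure Ω, w x + c * z x = 0) := by
  obtain ⟨hopen, hconn, hbdd⟩ := hΩ
  have hmeas : MeasurableSet Ω := hopen.measurableSet
  have hcpt : IsCompact (closure Ω) := hbdd.isCompact_closure
  have hsub : Ω ⊆ closure Ω := subset_closure
  -- integrability helper
  have hint : ∀ g : Pt n → ℝ, ContinuousOn g (closure Ω) → IntegrableOn g Ω volume := by
    intro g hg
    exact (hg.integrableOn_compact hcpt).mono_set hsub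
  have hf : ContinuousOn (fun x => w x + c * z x) (closure Ω) :=
    hw.add (continuousOn_const.mul hz)
  have hi1 : IntegrableOn (fun x => (w x + c * z x) * w x ^ 2) Ω volume :=
    hint _ (hf.mul (hw.pow 2))
  have hi2 : IntegrableOn (fun x => (b * w x + z x) * z x ^ 2) Ω volume :=
    hint _ (((continuousOn_const.mul hw).add hz).mul (hz.pow 2))
  have hi3 : IntegrableOn (fun x => (w x + c * z x) * (c * z x) ^ 2) Ω volume :=
    hint _ (hf.mul ((continuousOn_const.mul hz).pow 2))
  have hi4 : IntegrableOn (fun x => (w x + c * z x) ^ 2 * (c * z x - w x)) Ω volume :=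
    hint _ ((hf.pow 2).mul ((continuousOn_const.mul hz).sub hw))
  have hi5 : IntegrableOn (fun x => w x * z x ^ 2) Ω volume := hint _ (hw.mul (hz.pow 2))
  -- step 2: c^3 * (bw+z)z² ≤ (w+cz)(cz)² on Ω
  have key2 : c^3 * (∫ x in Ω, (b * w x + z x) * z x ^ 2)
      ≤ ∫ x in Ω, (w x + c * z x) * (c * z x) ^ 2 := by
    rw [← integral_const_mul]
    refine setIntegral_mono_on (hi2.const_mul _) hi3 hmeas ?_
    intro x hx
    have hwx := hwpos x (hsub hx)
    have : c^3 * ((b * w x + z x) * z x ^ 2) = (b*c * w x + c * z x) * (c * z x)^2 := by ring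
    rw [this]
    nlinarith [mul_nonneg (mul_nonneg (sub_nonneg.2 hbc) hwx.le) (sq_nonneg (c * z x))]
  -- step 3: integral identity
  have hsplit : (∫ x in Ω, (w x + c * z x) ^ 2 * (c * z x - w x))
      = (∫ x in Ω, (w x + c * z x) * (c * z x) ^ 2)
        - (∫ x in Ω, (w x + c * z x) * w x ^ 2) := by
    rw [← integral_sub hi3 hi1]
    refine setIntegral_congr_fun hmeas fun x _ => ?_
    ring
  have hI0 : 0 ≤ ∫ x in Ω, (w x + c * z x) ^ 2 * (c * z x - w x) := by
    rw [hsplit]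
    have : 0 ≤ c^3 * (∫ x in Ω, (b * w x + z x) * z x ^ 2) := by positivity
    linarith
  -- integrand nonpositive, so integral ≤ 0 and hence = 0, function = 0 ae
  have hnonpos : ∀ x ∈ Ω, (w x + c * z x) ^ 2 * (c * z x - w x) ≤ 0 := by
    intro x hx
    have hwx := hwpos x (hsub hx); have hzx := hzneg x (hsub hx)
    have : c * z x - w x < 0 := by nlinarith
    nlinarith [sq_nonneg (w x + c * z x)]
  have hIz : (∫ x in Ω, (w x + c * z x) ^ 2 * (c * z x - w x)) = 0 :=
    le_antisymm (setIntegral_nonpos hmeas hnonpos) hI0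
  have hnn' : 0 ≤ᵐ[volume.restrict Ω] fun x => -((w x + c * z x) ^ 2 * (c * z x - w x)) := by
    filter_upwards [ae_restrict_mem hmeas] with x hx
    simpa using hnonpos x hx
  have hz0 : (∫ x in Ω, -((w x + c * z x) ^ 2 * (c * z x - w x))) = 0 := by
    rw [integral_neg, hIz, neg_zero]
  have hae : (fun x => -((w x + c * z x) ^ 2 * (c * z x - w x))) =ᵐ[volume.restrict Ω] 0 :=
    (integral_eq_zero_iff_of_nonneg_ae hnn' hi4.neg).mp hz0
  -- ae zero + continuity ⇒ zero on Ω
  have hzeroΩ : ∀ x ∈ Ω, w x + c * z x = 0 := by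
    have heq : Set.EqOn (fun x => -((w x + c * z x) ^ 2 * (c * z x - w x))) 0 Ω :=
      Measure.eqOn_open_of_ae_eq hae hopen
        (((hf.pow 2).mul ((continuousOn_const.mul hz).sub hw)).neg.mono hsub)
        continuousOn_const
    intro x hx
    have h0 := heq hx
    simp only [Pi.zero_apply, neg_eq_zero, mul_eq_zero] at h0
    have hwx := hwpos x (hsub hx); have hzx := hzneg x (hsub hx)
    rcases h0 with h0 | h0
    · exact pow_eq_zero_iff (by norm_num) |>.mp h0
    · nlinarith
  -- extend to closure
  have hzerocl : ∀ x ∈ closure Ω, w x + c * z x = 0 := by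
    have : Set.EqOn (fun x => w x + c * z x) 0 (closure Ω) :=
      Set.EqOn.of_subset_closure (fun x hx => hzeroΩ x hx) hf continuousOn_const hsub le_rfl
    exact fun x hx => this hx
  -- bc = 1
  refine ⟨hI0, ?_, hzerocl⟩
  -- ∫ (w+cz)(cz)² = 0
  have hIz3 : (∫ x in Ω, (w x + c * z x) * (c * z x) ^ 2) = 0 := by
    have : (∫ x in Ω, (w x + c * z x) * (c * z x) ^ 2) = ∫ _x in Ω, (0:ℝ) :=
      setIntegral_congr_fun hmeas fun x hx => by rw [hzeroΩ x hx]; ring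
    simpa using this
  have h2z : (∫ x in Ω, (b * w x + z x) * z x ^ 2) = 0 := by
    have hc3 : (0:ℝ) < c^3 := by positivity
    nlinarith
  -- (w+cz)z² - c(bw+z)z² = (1-bc) w z²
  have hkey : (1 - b*c) * (∫ x in Ω, w x * z x ^ 2) = 0 := by
    have : (∫ x in Ω, (1 - b*c) * (w x * z x ^ 2))
        = (∫ x in Ω, (w x + c * z x) * z x ^ 2) - c * (∫ x in Ω, (b * w x + z x) * z x ^ 2) := by
      rw [← integral_const_mul, ← integral_sub (hint (fun x => (w x + c * z x) * z x ^ 2) (hf.mul (hz.pow 2)))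
        ((hi2.const_mul c))]
      refine setIntegral_congr_fun hmeas fun x _ => ?_
      ring
    rw [← integral_const_mul, this, h2z]
    have : (∫ x in Ω, (w x + c * z x) * z x ^ 2) = 0 := by
      have h' : (∫ x in Ω, (w x + c * z x) * z x ^ 2) = ∫ _x in Ω, (0:ℝ) :=
        setIntegral_congr_fun hmeas fun x hx => by rw [hzeroΩ x hx]; ring
      simpa using h'
    rw [this]; ring
  -- ∫ w z² > 0
  have hpos : 0 < ∫ x in Ω, w x * z x ^ 2 := by
    rcases hconn.nonempty with ⟨x0, hx0⟩
    have hne : (∫ x in Ω, w x * z x ^ 2) ≠ 0 := by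
      intro h0
      have hnn : 0 ≤ᵐ[volume.restrict Ω] fun x => w x * z x ^ 2 := by
        filter_upwards [ae_restrict_mem hmeas] with x hx
        have := hwpos x (hsub hx)
        positivity
      have := (integral_eq_zero_iff_of_nonneg_ae hnn hi5).mp h0
      have heq : Set.EqOn (fun x => w x * z x ^ 2) 0 Ω :=
        Measure.eqOn_open_of_ae_eq this hopen ((hw.mul (hz.pow 2)).mono hsub) continuousOn_const
      have h0' := heq hx0
      have hwx := hwpos x0 (hsub hx0); have hzx := hzneg x0 (hsub hx0)
      simp only [Pi.zero_apply] at h0'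
      exact mul_ne_zero hwx.ne' (pow_ne_zero 2 hzx.ne) h0'
    rcases hne.lt_or_gt with h | h
    · exfalso
      have : (∫ x in Ω, w x * z x ^ 2) ≥ 0 := by
        refine setIntegral_nonneg hmeas fun x hx => ?_
        have := hwpos x (hsub hx); positivity
      linarith
    · exact h
  have : 1 - b*c = 0 := by
    rcases mul_eq_zero.mp hkey with h | h
    · exact h
    · exact absurd h hpos.ne'
  linarith
end
end

section
/- Assume k and p are dispersal kernels, m, M ∈ C(Ω̄) are nonconstant, d, D > 0, and b, c > 0 are constants with bc ≤ 1. If u, v ∈ L^∞(Ω) satisfy u > 0 and v > 0 almost everywhere in Ω and satisfy, for almost every x ∈ Ω, the steady-state equations d(∫_Ω k(x,y)u(y) dy − (∫_Ω k(y,x) dy)u(x)) + u(x)(m(x) − u(x) − c v(x)) = 0 and D(∫_Ω p(x,y)v(y) dy − (∫_Ω p(y,x) dy)v(x)) + v(x)(M(x) − b u(x) − v(x)) = 0, then there exist continuous functions ũ, ṽ ∈ C(Ω̄) such that u = ũ and v = ṽ almost everywhere in Ω. -/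
open MeasureTheory Topology Filter

noncomputable section

namespace StmtAux

open ENNReal NNReal

set_option maxHeartbeats 1000000

/-! ### The positive root of a quadratic -/

def posRoot (s F : ℝ) : ℝ := (-s + Real.sqrt (s ^ 2 + 4 * F)) / 2

lemma sqrt_sq' {s F : ℝ} (hF : 0 ≤ F) :
    Real.sqrt (s ^ 2 + 4 * F) ^ 2 = s ^ 2 + 4 * F :=
  Real.sq_sqrt (by positivity)

lemma posRoot_pos (s : ℝ) {F : ℝ} (hF : 0 < F) : 0 < posRoot s F := by
  have h1 := sqrt_sq' (s := s) hF.le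
  have h2 : 0 ≤ Real.sqrt (s ^ 2 + 4 * F) := Real.sqrt_nonneg _
  unfold posRoot
  nlinarith [sq_nonneg (Real.sqrt (s ^ 2 + 4 * F) + s)]

lemma posRoot_eq (s : ℝ) {F : ℝ} (hF : 0 ≤ F) :
    posRoot s F ^ 2 + s * posRoot s F = F := by
  have h1 := sqrt_sq' (s := s) hF
  unfold posRoot
  nlinarith []

lemma le_posRoot {s F u : ℝ} (hu : 0 < u) (hF : 0 < F)
    (h : u ^ 2 + s * u ≤ F) : u ≤ posRoot s F := by
  have h1 := posRoot_eq s hF.le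
  have h2 := posRoot_pos s hF
  nlinarith [sq_nonneg (u - posRoot s F)]

lemma posRoot_le {s F u : ℝ} (hu : 0 < u) (hF : 0 < F)
    (h : F ≤ u ^ 2 + s * u) : posRoot s F ≤ u := by
  have h1 := posRoot_eq s hF.le
  have h2 := posRoot_pos s hF
  nlinarith [sq_nonneg (u - posRoot s F)]

lemma posRoot_anti {s s' F : ℝ} (hF : 0 < F) (hss : s ≤ s') :
    posRoot s' F ≤ posRoot s F := by
  apply le_posRoot (posRoot_pos s' hF) hF
  have h1 := posRoot_eq s' hF.le
  have h2 := posRoot_pos s' hF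
  nlinarith

lemma posRoot_mono {s F F' : ℝ} (hF : 0 < F) (hFF : F ≤ F') :
    posRoot s F ≤ posRoot s F' := by
  apply le_posRoot (posRoot_pos s hF) (hF.trans_le hFF)
  have h1 := posRoot_eq s hF.le
  linarith

lemma posRoot_continuous_s {F : ℝ} : Continuous fun s => posRoot s F := by
  unfold posRoot
  fun_prop

/-! ### The coupled quadratic system -/

lemma exists_sol (b c α β F G : ℝ) (hb : 0 < b) (hc : 0 < c) (hF : 0 < F) (hG : 0 < G) :
    ∃ w : ℝ × ℝ, 0 < w.1 ∧ 0 < w.2 ∧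
      w.1 ^ 2 + w.1 * (α + c * w.2) = F ∧ w.2 ^ 2 + w.2 * (β + b * w.1) = G := by
  set h : ℝ → ℝ := fun t => posRoot (α + c * posRoot (β + b * t) G) F with hh
  have hcont : Continuous h := by
    unfold h
    exact posRoot_continuous_s.comp (by
      exact (continuous_const.add (continuous_const.mul
        (posRoot_continuous_s.comp (continuous_const.add (continuous_const.mul continuous_id))))))
  set T : ℝ := posRoot α F with hT
  have hT0 : 0 < T := posRoot_pos _ hF
  have hub : ∀ t : ℝ, h t ≤ T := by
    intro t
    apply posRoot_anti hF
    nlinarith [posRoot_pos (β + b * t) hG]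
  have hg : ∃ t ∈ Set.Icc (0:ℝ) T, h t - t = 0 := by
    have hivt := intermediate_value_Icc' (a := (0:ℝ)) (b := T) hT0.le
      (f := fun t => h t - t) ((hcont.sub continuous_id).continuousOn)
    have hmem : (0:ℝ) ∈ Set.Icc (h T - T) (h 0 - 0) := by
      constructor
      · simpa using sub_nonpos.2 (hub T)
      · simpa using (posRoot_pos _ hF).le
    obtain ⟨t, ht, ht2⟩ := hivt hmem
    exact ⟨t, ht, ht2⟩
  obtain ⟨t, _, ht2⟩ := hg
  have htfix : h t = t := by linarith
  set v := posRoot (β + b * t) G with hv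
  have hvpos : 0 < v := posRoot_pos _ hG
  have htpos : 0 < t := htfix ▸ posRoot_pos _ hF
  have e : posRoot (α + c * v) F = t := htfix
  refine ⟨(t, v), htpos, hvpos, ?_, ?_⟩
  · have h5 := posRoot_eq (α + c * v) hF.le
    rw [e] at h5
    simp only
    linear_combination h5
  · have h5 := posRoot_eq (β + b * t) hG.le
    simp only [hv]
    linear_combination h5

lemma sol_unique {b c α β F G u1 v1 u2 v2 : ℝ} (hb : 0 < b) (hc : 0 < c) (hbc : b * c ≤ 1)
    (hF : 0 < F) (hG : 0 < G)
    (hu1 : 0 < u1) (hv1 : 0 < v1) (hu2 : 0 < u2) (hv2 : 0 < v2)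
    (h1 : u1 ^ 2 + u1 * (α + c * v1) = F) (h2 : u2 ^ 2 + u2 * (α + c * v2) = F)
    (h3 : v1 ^ 2 + v1 * (β + b * u1) = G) (h4 : v2 ^ 2 + v2 * (β + b * u2) = G) :
    u1 = u2 ∧ v1 = v2 := by
  have I1 : (u1 - u2) * (u1 * u2 + F) = c * (u1 * u2) * (v2 - v1) := by
    linear_combination u2 * h1 - u1 * h2
  have I2 : (v1 - v2) * (v1 * v2 + G) = b * (v1 * v2) * (u2 - u1) := by
    linear_combination v2 * h3 - v1 * h4
  have key : (u1 - u2) * ((u1 * u2 + F) * (v1 * v2 + G) - b * c * (u1 * u2 * (v1 * v2))) = 0 := by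
    linear_combination (v1 * v2 + G) * I1 - c * (u1 * u2) * I2
  have hpos : 0 < (u1 * u2 + F) * (v1 * v2 + G) - b * c * (u1 * u2 * (v1 * v2)) := by
    nlinarith [mul_pos hu1 hu2, mul_pos hv1 hv2, mul_pos (mul_pos hu1 hu2) (mul_pos hv1 hv2)]
  have hu : u1 = u2 := by
    rcases mul_eq_zero.1 key with h | h
    · linarith
    · linarith
  refine ⟨hu, ?_⟩
  rw [hu] at I2
  have : (v1 - v2) * (v1 * v2 + G) = 0 := by rw [I2]; ring
  rcases mul_eq_zero.1 this with h | h
  · linarith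
  · nlinarith [mul_pos hv1 hv2]

/-! ### Quantitative stability estimate -/

lemma comb {du dv P Q F2 G2 A B Fd Gd b c u2 v2 : ℝ}
    (E1 : du * (P + F2) ≤ P * A + c * P * dv + u2 * Fd)
    (E2 : dv * (Q + G2) ≤ Q * B + b * Q * du + v2 * Gd)
    (hQG : 0 ≤ Q + G2) (hcP : 0 ≤ c * P) :
    du * ((P + F2) * (Q + G2) - b * c * (P * Q)) ≤
      (P * A + u2 * Fd) * (Q + G2) + c * P * (Q * B) + c * P * (v2 * Gd) := by
  have s1 := mul_le_mul_of_nonneg_right E1 hQG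
  have s2 := mul_le_mul_of_nonneg_left E2 hcP
  nlinarith [s1, s2]

lemma coefLB {b c P Q F2 G2 Fm Gm : ℝ} (hbc : b * c ≤ 1) (hP : 0 < P) (hQ : 0 < Q)
    (hFm : 0 < Fm) (hF2 : Fm ≤ F2) (hGm : 0 < Gm) (hG2 : Gm ≤ G2) :
    Fm * Gm ≤ (P + F2) * (Q + G2) - b * c * (P * Q) := by
  linarith [mul_pos hP hQ, mul_pos (hFm.trans_le hF2) hQ, mul_pos hP (hGm.trans_le hG2),
    mul_le_mul hF2 hG2 hGm.le (hFm.le.trans hF2),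
    mul_nonneg (mul_pos hP hQ).le (sub_nonneg.2 hbc)]

lemma rhsUB {P Q u2 v2 A B Fd Gd G2 U V Gp c : ℝ}
    (hPU : P ≤ U ^ 2) (hP : 0 ≤ P) (hQV : Q ≤ V ^ 2) (hQ : 0 ≤ Q)
    (hu2 : 0 ≤ u2) (hu2U : u2 ≤ U) (hv2 : 0 ≤ v2) (hv2V : v2 ≤ V)
    (hG2 : 0 ≤ G2) (hG2p : G2 ≤ Gp) (hA : 0 ≤ A) (hB : 0 ≤ B) (hFd : 0 ≤ Fd)
    (hGd : 0 ≤ Gd) (hc : 0 ≤ c) (hV : 0 ≤ V) (hU : 0 ≤ U) (hGp : 0 ≤ Gp) :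
    (P * A + u2 * Fd) * (Q + G2) + c * P * (Q * B) + c * P * (v2 * Gd) ≤
      ((U ^ 2 + U) * (V ^ 2 + Gp) + c * U ^ 2 * (V ^ 2 + V)) * (A + Fd + B + Gd) := by
  have h1 : (P * A + u2 * Fd) * (Q + G2) ≤ (U ^ 2 * A + U * Fd) * (V ^ 2 + Gp) := by
    have e1 : P * A ≤ U ^ 2 * A := mul_le_mul_of_nonneg_right hPU hA
    have e2 : u2 * Fd ≤ U * Fd := mul_le_mul_of_nonneg_right hu2U hFd
    have e3 : Q + G2 ≤ V ^ 2 + Gp := by linarith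
    have e4 : 0 ≤ P * A + u2 * Fd := by positivity
    have e5 : 0 ≤ V ^ 2 + Gp := by positivity
    exact mul_le_mul (by linarith) e3 (by linarith) (by nlinarith)
  have h2 : c * P * (Q * B) ≤ c * U ^ 2 * (V ^ 2 * B) := by
    have e1 : Q * B ≤ V ^ 2 * B := mul_le_mul_of_nonneg_right hQV hB
    have e2 : c * P ≤ c * U ^ 2 := mul_le_mul_of_nonneg_left hPU hc
    exact mul_le_mul e2 e1 (by positivity) (by positivity)
  have h3 : c * P * (v2 * Gd) ≤ c * U ^ 2 * (V * Gd) := by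
    have e1 : v2 * Gd ≤ V * Gd := mul_le_mul_of_nonneg_right hv2V hGd
    have e2 : c * P ≤ c * U ^ 2 := mul_le_mul_of_nonneg_left hPU hc
    exact mul_le_mul e2 e1 (by positivity) (by positivity)
  have k1 : U ^ 2 * A * (V ^ 2 + Gp) ≤ ((U ^ 2 + U) * (V ^ 2 + Gp) + c * U ^ 2 * (V ^ 2 + V)) * A := by
    linarith [mul_nonneg (mul_nonneg hU hA) (by positivity : (0:ℝ) ≤ V ^ 2 + Gp),
      mul_nonneg (mul_nonneg (mul_nonneg hc (by positivity : (0:ℝ) ≤ U ^ 2)) (by positivity : (0:ℝ) ≤ V ^ 2 + V)) hA]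
  have k2 : U * Fd * (V ^ 2 + Gp) ≤ ((U ^ 2 + U) * (V ^ 2 + Gp) + c * U ^ 2 * (V ^ 2 + V)) * Fd := by
    linarith [mul_nonneg (mul_nonneg (by positivity : (0:ℝ) ≤ U ^ 2) hFd) (by positivity : (0:ℝ) ≤ V ^ 2 + Gp),
      mul_nonneg (mul_nonneg (mul_nonneg hc (by positivity : (0:ℝ) ≤ U ^ 2)) (by positivity : (0:ℝ) ≤ V ^ 2 + V)) hFd]
  have k3 : c * U ^ 2 * (V ^ 2 * B) ≤ ((U ^ 2 + U) * (V ^ 2 + Gp) + c * U ^ 2 * (V ^ 2 + V)) * B := by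
    linarith [mul_nonneg (mul_nonneg (by positivity : (0:ℝ) ≤ (U ^ 2 + U)) (by positivity : (0:ℝ) ≤ V ^ 2 + Gp)) hB,
      mul_nonneg (mul_nonneg (mul_nonneg hc (by positivity : (0:ℝ) ≤ U ^ 2)) hV) hB]
  have k4 : c * U ^ 2 * (V * Gd) ≤ ((U ^ 2 + U) * (V ^ 2 + Gp) + c * U ^ 2 * (V ^ 2 + V)) * Gd := by
    linarith [mul_nonneg (mul_nonneg (by positivity : (0:ℝ) ≤ (U ^ 2 + U)) (by positivity : (0:ℝ) ≤ V ^ 2 + Gp)) hGd,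
      mul_nonneg (mul_nonneg (mul_nonneg hc (by positivity : (0:ℝ) ≤ U ^ 2)) (by positivity : (0:ℝ) ≤ V ^ 2)) hGd]
  linarith [h1, h2, h3, k1, k2, k3, k4]

lemma key_estimate {b c U V Fm Gm Gp : ℝ} (hb : 0 < b) (hc : 0 < c) (hbc : b * c ≤ 1)
    {u1 u2 v1 v2 a1 a2 b1 b2 F1 F2 G1 G2 : ℝ}
    (hu1 : 0 < u1) (hu1U : u1 ≤ U) (hu2 : 0 < u2) (hu2U : u2 ≤ U)
    (hv1 : 0 < v1) (hv1V : v1 ≤ V) (hv2 : 0 < v2) (hv2V : v2 ≤ V)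
    (hFm : 0 < Fm) (hF2 : Fm ≤ F2) (hGm : 0 < Gm) (hG2 : Gm ≤ G2) (hG2p : G2 ≤ Gp)
    (h1 : u1 ^ 2 + u1 * (a1 + c * v1) = F1) (h2 : u2 ^ 2 + u2 * (a2 + c * v2) = F2)
    (h3 : v1 ^ 2 + v1 * (b1 + b * u1) = G1) (h4 : v2 ^ 2 + v2 * (b2 + b * u2) = G2) :
    |u1 - u2| ≤ ((U ^ 2 + U) * (V ^ 2 + Gp) + c * U ^ 2 * (V ^ 2 + V)) / (Fm * Gm) *
      (|a1 - a2| + |F1 - F2| + |b1 - b2| + |G1 - G2|) := by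
  have hP : 0 < u1 * u2 := mul_pos hu1 hu2
  have hQ : 0 < v1 * v2 := mul_pos hv1 hv2
  have hU : 0 < U := hu1.trans_le hu1U
  have hV : 0 < V := hv1.trans_le hv1V
  have hGp : 0 < Gp := (hGm.trans_le hG2).trans_le hG2p
  have I1 : (u1 - u2) * (u1 * u2 + F2) =
      u1 * u2 * ((a2 - a1) + c * (v2 - v1)) + u2 * (F1 - F2) := by
    linear_combination u2 * h1 - u1 * h2
  have I2 : (v1 - v2) * (v1 * v2 + G2) =
      v1 * v2 * ((b2 - b1) + b * (u2 - u1)) + v2 * (G1 - G2) := by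
    linear_combination v2 * h3 - v1 * h4
  have E1 : |u1 - u2| * (u1 * u2 + F2) ≤
      u1 * u2 * |a1 - a2| + c * (u1 * u2) * |v1 - v2| + u2 * |F1 - F2| := by
    have e : |u1 - u2| * (u1 * u2 + F2) = |(u1 - u2) * (u1 * u2 + F2)| := by
      rw [abs_mul, abs_of_pos (show (0:ℝ) < u1 * u2 + F2 by linarith)]
    rw [e, I1]
    calc |u1 * u2 * ((a2 - a1) + c * (v2 - v1)) + u2 * (F1 - F2)|
        ≤ |u1 * u2 * ((a2 - a1) + c * (v2 - v1))| + |u2 * (F1 - F2)| := abs_add_le _ _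
      _ = u1 * u2 * |(a2 - a1) + c * (v2 - v1)| + u2 * |F1 - F2| := by
          rw [abs_mul (u1 * u2), abs_mul u2, abs_of_pos hP, abs_of_pos hu2]
      _ ≤ u1 * u2 * (|a2 - a1| + c * |v2 - v1|) + u2 * |F1 - F2| := by
          have t1 : |(a2 - a1) + c * (v2 - v1)| ≤ |a2 - a1| + c * |v2 - v1| := by
            calc |(a2 - a1) + c * (v2 - v1)| ≤ |a2 - a1| + |c * (v2 - v1)| := abs_add_le _ _
              _ = |a2 - a1| + c * |v2 - v1| := by rw [abs_mul, abs_of_pos hc]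
          linarith [mul_le_mul_of_nonneg_left t1 hP.le]
      _ = u1 * u2 * |a1 - a2| + c * (u1 * u2) * |v1 - v2| + u2 * |F1 - F2| := by
          rw [abs_sub_comm a2 a1, abs_sub_comm v2 v1]; ring
  have E2 : |v1 - v2| * (v1 * v2 + G2) ≤
      v1 * v2 * |b1 - b2| + b * (v1 * v2) * |u1 - u2| + v2 * |G1 - G2| := by
    have e : |v1 - v2| * (v1 * v2 + G2) = |(v1 - v2) * (v1 * v2 + G2)| := by
      rw [abs_mul, abs_of_pos (show (0:ℝ) < v1 * v2 + G2 by linarith)]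
    rw [e, I2]
    calc |v1 * v2 * ((b2 - b1) + b * (u2 - u1)) + v2 * (G1 - G2)|
        ≤ |v1 * v2 * ((b2 - b1) + b * (u2 - u1))| + |v2 * (G1 - G2)| := abs_add_le _ _
      _ = v1 * v2 * |(b2 - b1) + b * (u2 - u1)| + v2 * |G1 - G2| := by
          rw [abs_mul (v1 * v2), abs_mul v2, abs_of_pos hQ, abs_of_pos hv2]
      _ ≤ v1 * v2 * (|b2 - b1| + b * |u2 - u1|) + v2 * |G1 - G2| := by
          have t1 : |(b2 - b1) + b * (u2 - u1)| ≤ |b2 - b1| + b * |u2 - u1| := by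
            calc |(b2 - b1) + b * (u2 - u1)| ≤ |b2 - b1| + |b * (u2 - u1)| := abs_add_le _ _
              _ = |b2 - b1| + b * |u2 - u1| := by rw [abs_mul, abs_of_pos hb]
          linarith [mul_le_mul_of_nonneg_left t1 hQ.le]
      _ = v1 * v2 * |b1 - b2| + b * (v1 * v2) * |u1 - u2| + v2 * |G1 - G2| := by
          rw [abs_sub_comm b2 b1, abs_sub_comm u2 u1]; ring
  have hcomb := comb (P := u1 * u2) (Q := v1 * v2) E1 E2 (by linarith) (by positivity)
  have hcoef := coefLB (P := u1 * u2) (Q := v1 * v2) hbc hP hQ hFm hF2 hGm hG2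
  have hPU : u1 * u2 ≤ U ^ 2 := by nlinarith [mul_le_mul hu1U hu2U hu2.le hU.le]
  have hQV : v1 * v2 ≤ V ^ 2 := by nlinarith [mul_le_mul hv1V hv2V hv2.le hV.le]
  have hrhs := rhsUB (c := c) (A := |a1 - a2|) (B := |b1 - b2|) (Fd := |F1 - F2|)
    (Gd := |G1 - G2|) hPU hP.le hQV hQ.le hu2.le hu2U hv2.le hv2V
    (by linarith : (0:ℝ) ≤ G2) hG2p (abs_nonneg _) (abs_nonneg _) (abs_nonneg _)
    (abs_nonneg _) hc.le hV.le hU.le hGp.le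
  have h5 : |u1 - u2| * (Fm * Gm) ≤
      |u1 - u2| * ((u1 * u2 + F2) * (v1 * v2 + G2) - b * c * (u1 * u2 * (v1 * v2))) :=
    mul_le_mul_of_nonneg_left hcoef (abs_nonneg _)
  have h6 : |u1 - u2| * (Fm * Gm) ≤
      ((U ^ 2 + U) * (V ^ 2 + Gp) + c * U ^ 2 * (V ^ 2 + V)) *
        (|a1 - a2| + |F1 - F2| + |b1 - b2| + |G1 - G2|) :=
    le_trans h5 (le_trans hcomb hrhs)
  rw [div_mul_eq_mul_div, le_div_iff₀ (by positivity : (0:ℝ) < Fm * Gm)]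
  linarith only [h6]

/-! ### The solution map -/

def solPair (b c α β F G : ℝ) : ℝ × ℝ :=
  if h : 0 < b ∧ 0 < c ∧ 0 < F ∧ 0 < G then
    (exists_sol b c α β F G h.1 h.2.1 h.2.2.1 h.2.2.2).choose
  else (1, 1)

lemma solPair_spec {b c α β F G : ℝ} (hb : 0 < b) (hc : 0 < c) (hF : 0 < F) (hG : 0 < G) :
    0 < (solPair b c α β F G).1 ∧ 0 < (solPair b c α β F G).2 ∧
    (solPair b c α β F G).1 ^ 2 +
      (solPair b c α β F G).1 * (α + c * (solPair b c α β F G).2) = F ∧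
    (solPair b c α β F G).2 ^ 2 +
      (solPair b c α β F G).2 * (β + b * (solPair b c α β F G).1) = G := by
  rw [solPair, dif_pos (⟨hb, hc, hF, hG⟩ : 0 < b ∧ 0 < c ∧ 0 < F ∧ 0 < G)]
  exact (exists_sol b c α β F G hb hc hF hG).choose_spec

lemma solPair_swap {b c α β F G : ℝ} (hb : 0 < b) (hc : 0 < c) (hbc : b * c ≤ 1)
    (hF : 0 < F) (hG : 0 < G) :
    (solPair b c α β F G).1 = (solPair c b β α G F).2 ∧
    (solPair b c α β F G).2 = (solPair c b β α G F).1 := by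
  obtain ⟨p1, p2, e1, e2⟩ := solPair_spec (α := α) (β := β) hb hc hF hG
  obtain ⟨q1, q2, f1, f2⟩ := solPair_spec (α := β) (β := α) hc hb hG hF
  exact sol_unique hb hc hbc hF hG p1 p2 q2 q1 e1 f2 e2 f1

lemma sol_le {b c α β F G α' F' : ℝ} (hb : 0 < b) (hc : 0 < c) (hF : 0 < F) (hG : 0 < G)
    (hα : α' ≤ α) (hFu : F ≤ F') :
    (solPair b c α β F G).1 ≤ posRoot α' F' := by
  obtain ⟨h1, h2, h3, _⟩ := solPair_spec (α := α) (β := β) hb hc hF hG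
  have hF' : 0 < F' := lt_of_lt_of_le hF hFu
  have hq : (solPair b c α β F G).1 ^ 2 + α * (solPair b c α β F G).1 ≤ F := by
    nlinarith [mul_nonneg hc.le (mul_pos h1 h2).le]
  calc (solPair b c α β F G).1 ≤ posRoot α F := le_posRoot h1 hF hq
    _ ≤ posRoot α F' := posRoot_mono hF hFu
    _ ≤ posRoot α' F' := posRoot_anti hF' hα

lemma sol_comp1_continuousOn {X : Type*} [TopologicalSpace X] {b c : ℝ}
    (hb : 0 < b) (hc : 0 < c) (hbc : b * c ≤ 1) {s : Set X} {af bf Ff Gf : X → ℝ}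
    (hac : ContinuousOn af s) (hbcn : ContinuousOn bf s)
    (hFc : ContinuousOn Ff s) (hGc : ContinuousOn Gf s)
    (hFpos : ∀ x ∈ s, 0 < Ff x) (hGpos : ∀ x ∈ s, 0 < Gf x) :
    ContinuousOn (fun x => (solPair b c (af x) (bf x) (Ff x) (Gf x)).1) s := by
  intro x₀ hx₀
  have hF₀ : 0 < Ff x₀ := hFpos x₀ hx₀
  have hG₀ : 0 < Gf x₀ := hGpos x₀ hx₀
  set U := posRoot (af x₀ - 1) (Ff x₀ + 1) with hUdef
  set V := posRoot (bf x₀ - 1) (Gf x₀ + 1) with hVdef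
  have hU : 0 < U := posRoot_pos _ (by linarith)
  have hV : 0 < V := posRoot_pos _ (by linarith)
  set K1 := ((U ^ 2 + U) * (V ^ 2 + (Gf x₀ + 1)) + c * U ^ 2 * (V ^ 2 + V)) /
      (Ff x₀ / 2 * (Gf x₀ / 2)) with hK1def
  have hK1 : 0 < K1 := by
    apply div_pos
    · have t4 : 0 < U ^ 2 := pow_pos hU 2
      have t5 : 0 < V ^ 2 := pow_pos hV 2
      have t1 : 0 < U ^ 2 + U := by linarith
      have t2 : 0 < V ^ 2 + (Gf x₀ + 1) := by linarith
      have t3 : 0 < V ^ 2 + V := by linarith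
      exact add_pos (mul_pos t1 t2) (mul_pos (mul_pos hc t4) t3)
    · exact mul_pos (by linarith) (by linarith)
  show Filter.Tendsto _ (nhdsWithin x₀ s) _
  rw [Metric.tendsto_nhds]
  intro ε hε
  set η := min 1 (min (Ff x₀ / 2) (min (Gf x₀ / 2) (ε / (4 * (K1 + 1))))) with hηdef
  have hη : 0 < η :=
    lt_min one_pos (lt_min (by linarith) (lt_min (by linarith) (div_pos hε (by linarith))))
  have hη1 : η ≤ 1 := min_le_left _ _
  have hηF : η ≤ Ff x₀ / 2 := (min_le_right _ _).trans (min_le_left _ _)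
  have hηG : η ≤ Gf x₀ / 2 :=
    (min_le_right _ _).trans ((min_le_right _ _).trans (min_le_left _ _))
  have hηε : η ≤ ε / (4 * (K1 + 1)) :=
    (min_le_right _ _).trans ((min_le_right _ _).trans (min_le_right _ _))
  have evα := Metric.tendsto_nhds.1 (hac x₀ hx₀) η hη
  have evβ := Metric.tendsto_nhds.1 (hbcn x₀ hx₀) η hη
  have evF := Metric.tendsto_nhds.1 (hFc x₀ hx₀) η hη
  have evG := Metric.tendsto_nhds.1 (hGc x₀ hx₀) η hη
  filter_upwards [evα, evβ, evF, evG, self_mem_nhdsWithin] with x dα dβ dF dG hxs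
  rw [Real.dist_eq] at dα dβ dF dG ⊢
  have hFx : 0 < Ff x := hFpos x hxs
  have hGx : 0 < Gf x := hGpos x hxs
  obtain ⟨p1, p2, e1, e2⟩ :=
    solPair_spec (α := af x) (β := bf x) (F := Ff x) (G := Gf x) hb hc hFx hGx
  obtain ⟨q1, q2, f1, f2⟩ :=
    solPair_spec (α := af x₀) (β := bf x₀) (F := Ff x₀) (G := Gf x₀) hb hc hF₀ hG₀
  have habs := abs_lt.1 dα
  have habsF := abs_lt.1 dF
  have habsβ := abs_lt.1 dβ
  have habsG := abs_lt.1 dG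
  have hu1U : (solPair b c (af x) (bf x) (Ff x) (Gf x)).1 ≤ U :=
    sol_le hb hc hFx hGx (by linarith) (by linarith)
  have hu2U : (solPair b c (af x₀) (bf x₀) (Ff x₀) (Gf x₀)).1 ≤ U :=
    sol_le hb hc hF₀ hG₀ (by linarith) (by linarith)
  have hv1V : (solPair b c (af x) (bf x) (Ff x) (Gf x)).2 ≤ V := by
    rw [(solPair_swap hb hc hbc hFx hGx).2]
    exact sol_le hc hb hGx hFx (by linarith) (by linarith)
  have hv2V : (solPair b c (af x₀) (bf x₀) (Ff x₀) (Gf x₀)).2 ≤ V := by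
    rw [(solPair_swap hb hc hbc hF₀ hG₀).2]
    exact sol_le hc hb hG₀ hF₀ (by linarith) (by linarith)
  have est := key_estimate (Fm := Ff x₀ / 2) (Gm := Gf x₀ / 2) (Gp := Gf x₀ + 1)
    hb hc hbc p1 hu1U q1 hu2U p2 hv1V q2 hv2V
    (by linarith) (by linarith) (by linarith) (by linarith) (by linarith)
    e1 f1 e2 f2
  rw [← hK1def] at est
  set Δ := |af x - af x₀| + |Ff x - Ff x₀| + |bf x - bf x₀| + |Gf x - Gf x₀| with hΔdef
  have hΔ0 : 0 ≤ Δ := by positivity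
  have hΔlt : Δ < 4 * η := by
    simp only [hΔdef]
    linarith
  have hΔε : Δ < ε / (K1 + 1) := by
    have h4 : 4 * η ≤ 4 * (ε / (4 * (K1 + 1))) := by linarith
    have heq : 4 * (ε / (4 * (K1 + 1))) = ε / (K1 + 1) := by
      field_simp
    linarith
  have hfin : Δ * (K1 + 1) < ε := (lt_div_iff₀ (by linarith)).1 hΔε
  calc |(solPair b c (af x) (bf x) (Ff x) (Gf x)).1 -
        (solPair b c (af x₀) (bf x₀) (Ff x₀) (Gf x₀)).1| ≤ K1 * Δ := est
    _ ≤ (K1 + 1) * Δ := mul_le_mul_of_nonneg_right (by linarith only [hK1]) hΔ0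
    _ = Δ * (K1 + 1) := mul_comm _ _
    _ < ε := hfin

/-! ### Measure-theoretic lemmas -/

variable {n : ℕ} {Ω : Set (Pt n)}

lemma bound_of_memtop {u : Pt n → ℝ} (hu : MemLp u ⊤ (volume.restrict Ω)) :
    ∃ C : ℝ, ∀ᵐ y ∂(volume.restrict Ω), |u y| ≤ C := by
  refine ⟨(eLpNorm u ⊤ (volume.restrict Ω)).toReal, ?_⟩
  have h2 := hu.2
  rw [eLpNorm_exponent_top] at h2
  filter_upwards [enorm_ae_le_eLpNormEssSup u (volume.restrict Ω)] with y hy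
  have : ((‖u y‖₊ : ℝ≥0∞)).toReal ≤ (eLpNormEssSup u (volume.restrict Ω)).toReal :=
    ENNReal.toReal_mono h2.ne hy
  simpa [Real.norm_eq_abs] using this

lemma cont_kernel_int (hΩm : MeasurableSet Ω) (hΩb : Bornology.IsBounded Ω)
    {k : Pt n → Pt n → ℝ} (hkc : Continuous (Function.uncurry k))
    {w : Pt n → ℝ} (hw : AEStronglyMeasurable w (volume.restrict Ω))
    {Cw : ℝ} (hCw : ∀ᵐ y ∂(volume.restrict Ω), |w y| ≤ Cw) :
    Continuous fun x => ∫ y in Ω, k x y * w y := by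
  haveI : IsFiniteMeasure (volume.restrict Ω) :=
    ⟨by rw [Measure.restrict_apply_univ]; exact hΩb.measure_lt_top⟩
  rw [continuous_iff_continuousAt]
  intro x₀
  have hKcomp : IsCompact (Metric.closedBall x₀ 1 ×ˢ closure Ω) :=
    (isCompact_closedBall x₀ 1).prod hΩb.isCompact_closure
  obtain ⟨C₀, hC₀⟩ := hKcomp.exists_bound_of_continuousOn hkc.continuousOn
  apply continuousAt_of_dominated (bound := fun _ => C₀ * Cw)
  · filter_upwards with x
    exact ((hkc.comp (continuous_const.prodMk continuous_id)).aestronglyMeasurable).mul hw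
  · filter_upwards [Metric.closedBall_mem_nhds x₀ one_pos] with x hx
    filter_upwards [hCw, ae_restrict_mem hΩm] with y hCwy hyΩ
    have hky : ‖Function.uncurry k (x, y)‖ ≤ C₀ :=
      hC₀ (x, y) (Set.mem_prod.2 ⟨hx, subset_closure hyΩ⟩)
    have h0 : (0:ℝ) ≤ C₀ := le_trans (norm_nonneg _) hky
    have : ‖k x y * w y‖ = |k x y| * |w y| := by
      rw [Real.norm_eq_abs, abs_mul]
    rw [this]
    exact mul_le_mul (by simpa [Real.norm_eq_abs, Function.uncurry] using hky) hCwy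
      (abs_nonneg _) h0
  · exact integrable_const _
  · filter_upwards with y
    exact ((hkc.comp (continuous_id.prodMk continuous_const)).continuousAt).mul continuousAt_const

lemma kernel_int_pos (hΩo : IsOpen Ω) (hΩb : Bornology.IsBounded Ω)
    {k : Pt n → Pt n → ℝ} (hkc : Continuous (Function.uncurry k))
    (hk0 : ∀ x y, 0 ≤ k x y) {x₀ : Pt n} (hx₀ : x₀ ∈ closure Ω) (hkd : 0 < k x₀ x₀)
    {w : Pt n → ℝ} (hw : AEStronglyMeasurable w (volume.restrict Ω))
    {Cw : ℝ} (hCw : ∀ᵐ y ∂(volume.restrict Ω), |w y| ≤ Cw)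
    (hwpos : ∀ᵐ y ∂(volume.restrict Ω), 0 < w y) :
    0 < ∫ y in Ω, k x₀ y * w y := by
  haveI : IsFiniteMeasure (volume.restrict Ω) :=
    ⟨by rw [Measure.restrict_apply_univ]; exact hΩb.measure_lt_top⟩
  have hkcont : Continuous fun y => k x₀ y :=
    hkc.comp (continuous_const.prodMk continuous_id)
  obtain ⟨C₀, hC₀⟩ := hΩb.isCompact_closure.exists_bound_of_continuousOn hkcont.continuousOn
  have hInt : IntegrableOn (fun y => k x₀ y * w y) Ω volume := by
    refine ⟨(hkcont.aestronglyMeasurable).mul hw, HasFiniteIntegral.of_bounded (C := C₀ * Cw) ?_⟩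
    filter_upwards [hCw, ae_restrict_mem hΩo.measurableSet] with y hCwy hyΩ
    have hky : ‖k x₀ y‖ ≤ C₀ := hC₀ y (subset_closure hyΩ)
    have h0 : (0:ℝ) ≤ C₀ := le_trans (norm_nonneg _) hky
    rw [Real.norm_eq_abs, abs_mul]
    exact mul_le_mul (by simpa [Real.norm_eq_abs] using hky) hCwy (abs_nonneg _) h0
  have hO : IsOpen {y : Pt n | 0 < k x₀ y} := isOpen_lt continuous_const hkcont
  have hSopen : IsOpen (Ω ∩ {y : Pt n | 0 < k x₀ y}) := hΩo.inter hO
  have hSne : (Ω ∩ {y : Pt n | 0 < k x₀ y}).Nonempty := by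
    have := _root_.mem_closure_iff.1 hx₀ _ hO hkd
    rwa [Set.inter_comm]
  have hμS : 0 < volume (Ω ∩ {y : Pt n | 0 < k x₀ y}) := hSopen.measure_pos volume hSne
  have hnn : 0 ≤ᵐ[volume.restrict Ω] fun y => k x₀ y * w y := by
    filter_upwards [hwpos] with y hwy
    exact mul_nonneg (hk0 _ _) hwy.le
  have hIntS : IntegrableOn (fun y => k x₀ y * w y) (Ω ∩ {y : Pt n | 0 < k x₀ y}) volume :=
    hInt.mono_set Set.inter_subset_left
  have hnnS : 0 ≤ᵐ[volume.restrict (Ω ∩ {y : Pt n | 0 < k x₀ y})]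
      fun y => k x₀ y * w y :=
    ae_restrict_of_ae_restrict_of_subset Set.inter_subset_left hnn
  have hposS : ∀ᵐ y ∂(volume.restrict (Ω ∩ {y : Pt n | 0 < k x₀ y})),
      0 < k x₀ y * w y := by
    filter_upwards [ae_restrict_mem hSopen.measurableSet,
      ae_restrict_of_ae_restrict_of_subset Set.inter_subset_left hwpos] with y hyS hwy
    exact mul_pos hyS.2 hwy
  have hposint : 0 < ∫ y in (Ω ∩ {y : Pt n | 0 < k x₀ y}), k x₀ y * w y := by
    rw [integral_pos_iff_support_of_nonneg_ae hnnS hIntS]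
    by_contra hcon
    have h0 : (volume.restrict (Ω ∩ {y : Pt n | 0 < k x₀ y}))
        (Function.support fun y => k x₀ y * w y) = 0 :=
      le_antisymm (not_lt.1 hcon) zero_le
    have hev : ∀ᵐ y ∂(volume.restrict (Ω ∩ {y : Pt n | 0 < k x₀ y})),
        (fun y => k x₀ y * w y) y = 0 := by
      have := measure_eq_zero_iff_ae_notMem.1 h0
      filter_upwards [this] with y hy
      exact Function.notMem_support.1 hy
    have hFalse : ∀ᵐ _y ∂(volume.restrict (Ω ∩ {y : Pt n | 0 < k x₀ y})), False := by
      filter_upwards [hev, hposS] with y h1 h2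
      exact absurd h1 h2.ne'
    have hne : volume.restrict (Ω ∩ {y : Pt n | 0 < k x₀ y}) ≠ 0 := by
      rw [Ne, Measure.restrict_eq_zero]
      exact hμS.ne'
    exact (ae_neBot.2 hne).ne (eventually_false_iff_eq_bot.1 hFalse)
  calc (0:ℝ) < ∫ y in (Ω ∩ {y : Pt n | 0 < k x₀ y}), k x₀ y * w y := hposint
    _ ≤ ∫ y in Ω, k x₀ y * w y :=
      setIntegral_mono_set hInt hnn (HasSubset.Subset.eventuallyLE Set.inter_subset_left)

end StmtAux

set_option maxHeartbeats 1000000 in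
theorem stmt_8 {n : ℕ} (Ω : Set (Pt n)) (hΩ : IsBoundedDomain Ω)
    (k p : Pt n → Pt n → ℝ)
    (hk : IsDispersalKernel k) (hp : IsDispersalKernel p)
    (m M : Pt n → ℝ)
    (hm : ContinuousOn m (closure Ω)) (hM : ContinuousOn M (closure Ω))
    (hmnc : Nonconstant Ω m) (hMnc : Nonconstant Ω M)
    (d D b c : ℝ) (hd : 0 < d) (hD : 0 < D) (hb : 0 < b) (hc : 0 < c)
    (hbc : b * c ≤ 1)
    (u v : Pt n → ℝ)
    (hu : MemLp u ⊤ (volume.restrict Ω)) (hv : MemLp v ⊤ (volume.restrict Ω))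
    (hupos : ∀ᵐ x ∂(volume.restrict Ω), 0 < u x)
    (hvpos : ∀ᵐ x ∂(volume.restrict Ω), 0 < v x)
    (hueq : ∀ᵐ x ∂(volume.restrict Ω),
      d * ((∫ y in Ω, k x y * u y) - (∫ y in Ω, k y x) * u x) +
        u x * (m x - u x - c * v x) = 0)
    (hveq : ∀ᵐ x ∂(volume.restrict Ω),
      D * ((∫ y in Ω, p x y * v y) - (∫ y in Ω, p y x) * v x) +
        v x * (M x - b * u x - v x) = 0) :
    ∃ ut vt : Pt n → ℝ, ContinuousOn ut (closure Ω) ∧ ContinuousOn vt (closure Ω) ∧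
      u =ᵐ[volume.restrict Ω] ut ∧ v =ᵐ[volume.restrict Ω] vt := by
  obtain ⟨hΩo, hΩconn, hΩb⟩ := hΩ
  obtain ⟨hkc, hk0, hkdiag, -, -⟩ := hk
  obtain ⟨hpc, hp0, hpdiag, -, -⟩ := hp
  obtain ⟨Cu, hCu⟩ := StmtAux.bound_of_memtop hu
  obtain ⟨Cv, hCv⟩ := StmtAux.bound_of_memtop hv
  -- continuity of the coefficient functions
  have hswk : Continuous (Function.uncurry fun x y => k y x) := by
    have h : (Function.uncurry fun (x y : Pt n) => k y x) = (Function.uncurry k) ∘ Prod.swap :=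
      rfl
    rw [h]; exact hkc.comp continuous_swap
  have hswp : Continuous (Function.uncurry fun x y => p y x) := by
    have h : (Function.uncurry fun (x y : Pt n) => p y x) = (Function.uncurry p) ∘ Prod.swap :=
      rfl
    rw [h]; exact hpc.comp continuous_swap
  have hone : ∀ᵐ y ∂(volume.restrict Ω), |(fun _ : Pt n => (1:ℝ)) y| ≤ (1:ℝ) :=
    Filter.Eventually.of_forall (fun y => by norm_num)
  have hak : Continuous fun x => ∫ y in Ω, k y x := by
    have h := StmtAux.cont_kernel_int hΩo.measurableSet hΩb hswk
      (aestronglyMeasurable_const (b := (1:ℝ))) hone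
    simpa [mul_one] using h
  have hap : Continuous fun x => ∫ y in Ω, p y x := by
    have h := StmtAux.cont_kernel_int hΩo.measurableSet hΩb hswp
      (aestronglyMeasurable_const (b := (1:ℝ))) hone
    simpa [mul_one] using h
  have hFk : Continuous fun x => ∫ y in Ω, k x y * u y :=
    StmtAux.cont_kernel_int hΩo.measurableSet hΩb hkc hu.1 hCu
  have hGk : Continuous fun x => ∫ y in Ω, p x y * v y :=
    StmtAux.cont_kernel_int hΩo.measurableSet hΩb hpc hv.1 hCv
  have hαc : ContinuousOn (fun x => d * (∫ y in Ω, k y x) - m x) (closure Ω) :=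
    ((continuous_const.mul hak).continuousOn).sub hm
  have hβc : ContinuousOn (fun x => D * (∫ y in Ω, p y x) - M x) (closure Ω) :=
    ((continuous_const.mul hap).continuousOn).sub hM
  have hFcon : ContinuousOn (fun x => d * ∫ y in Ω, k x y * u y) (closure Ω) :=
    (continuous_const.mul hFk).continuousOn
  have hGcon : ContinuousOn (fun x => D * ∫ y in Ω, p x y * v y) (closure Ω) :=
    (continuous_const.mul hGk).continuousOn
  have hFpos : ∀ x ∈ closure Ω, 0 < d * ∫ y in Ω, k x y * u y := fun x hx =>
    mul_pos hd (StmtAux.kernel_int_pos hΩo hΩb hkc hk0 hx (hkdiag x) hu.1 hCu hupos)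
  have hGpos : ∀ x ∈ closure Ω, 0 < D * ∫ y in Ω, p x y * v y := fun x hx =>
    mul_pos hD (StmtAux.kernel_int_pos hΩo hΩb hpc hp0 hx (hpdiag x) hv.1 hCv hvpos)
  refine ⟨fun x => (StmtAux.solPair b c (d * (∫ y in Ω, k y x) - m x)
      (D * (∫ y in Ω, p y x) - M x) (d * ∫ y in Ω, k x y * u y)
      (D * ∫ y in Ω, p x y * v y)).1,
    fun x => (StmtAux.solPair b c (d * (∫ y in Ω, k y x) - m x)
      (D * (∫ y in Ω, p y x) - M x) (d * ∫ y in Ω, k x y * u y)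
      (D * ∫ y in Ω, p x y * v y)).2, ?_, ?_, ?_, ?_⟩
  · exact StmtAux.sol_comp1_continuousOn hb hc hbc hαc hβc hFcon hGcon hFpos hGpos
  · have h2 := StmtAux.sol_comp1_continuousOn hc hb (by rwa [mul_comm]) hβc hαc
      hGcon hFcon hGpos hFpos
    exact h2.congr (fun x hx =>
      (StmtAux.solPair_swap hb hc hbc (hFpos x hx) (hGpos x hx)).2)
  · filter_upwards [hueq, hveq, hupos, hvpos, ae_restrict_mem hΩo.measurableSet]
      with x h1 h2 h3 h4 hxΩ
    have hxs : x ∈ closure Ω := subset_closure hxΩ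
    have hFx := hFpos x hxs
    have hGx := hGpos x hxs
    obtain ⟨w1, w2, e1, e2⟩ := StmtAux.solPair_spec
      (α := d * (∫ y in Ω, k y x) - m x) (β := D * (∫ y in Ω, p y x) - M x) hb hc hFx hGx
    have eq1 : u x ^ 2 + u x * ((d * (∫ y in Ω, k y x) - m x) + c * v x) =
        d * ∫ y in Ω, k x y * u y := by linear_combination -h1
    have eq2 : v x ^ 2 + v x * ((D * (∫ y in Ω, p y x) - M x) + b * u x) =
        D * ∫ y in Ω, p x y * v y := by linear_combination -h2
    exact (StmtAux.sol_unique hb hc hbc hFx hGx h3 h4 w1 w2 eq1 e1 eq2 e2).1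
  · filter_upwards [hueq, hveq, hupos, hvpos, ae_restrict_mem hΩo.measurableSet]
      with x h1 h2 h3 h4 hxΩ
    have hxs : x ∈ closure Ω := subset_closure hxΩ
    have hFx := hFpos x hxs
    have hGx := hGpos x hxs
    obtain ⟨w1, w2, e1, e2⟩ := StmtAux.solPair_spec
      (α := d * (∫ y in Ω, k y x) - m x) (β := D * (∫ y in Ω, p y x) - M x) hb hc hFx hGx
    have eq1 : u x ^ 2 + u x * ((d * (∫ y in Ω, k y x) - m x) + c * v x) =
        d * ∫ y in Ω, k x y * u y := by linear_combination -h1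
    have eq2 : v x ^ 2 + v x * ((D * (∫ y in Ω, p y x) - M x) + b * u x) =
        D * ∫ y in Ω, p x y * v y := by linear_combination -h2
    exact (StmtAux.sol_unique hb hc hbc hFx hGx h3 h4 w1 w2 eq1 e1 eq2 e2).2
end
end

section
/- Let Ω be a nonempty bounded domain in ℝⁿ and let r > 0, δ > 0. Suppose u : Ω × [0,∞) → ℝ is nonnegative, u(·,t) ∈ L^∞(Ω) is measurable for each t ≥ 0, and for every x ∈ Ω the map t ↦ u(x,t) is differentiable with ∂u/∂t(x,t) ≥ δ ∫_{Ω ∩ B_r(x)} u(y,t) dy for all t ≥ 0, where B_r(x) is the open ball of radius r centered at x. Then there exist constants α > 0 and A₀ > 0 (depending only on Ω, r, δ) such that for every t₀ ≥ 0, every t ∈ (0,1), and every x ∈ Ω, u(x, t₀ + t) ≥ A₀ t^α ∫_Ω u(y, t₀) dy. -/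
open MeasureTheory Topology Filter

noncomputable section

namespace Stmt9Aux
variable {n : ℕ}

def chain (Ω : Set (Pt n)) (r : ℝ) : ℕ → Pt n → Pt n → Prop
  | 0, a, b => a = b
  | (k+1), a, b => ∃ w, w ∈ closure Ω ∧ dist a w < r/2 ∧ chain Ω r k w b

lemma chain_concat {Ω : Set (Pt n)} {r : ℝ} :
    ∀ {j : ℕ} {a : Pt n} {k : ℕ} {b c : Pt n},
      chain Ω r j a b → chain Ω r k b c → chain Ω r (j + k) a c := by
  intro j
  induction j with
  | zero =>
    intro a k b c h1 h2
    have : a = b := h1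
    subst this
    simpa using h2
  | succ m ih =>
    intro a k b c h1 h2
    obtain ⟨w, hw, hd, hc⟩ := h1
    rw [Nat.succ_add]
    exact ⟨w, hw, hd, ih hc h2⟩

lemma chain_single {Ω : Set (Pt n)} {r : ℝ} {a b : Pt n}
    (hb : b ∈ closure Ω) (hd : dist a b < r/2) : chain Ω r 1 a b :=
  ⟨b, hb, hd, rfl⟩

lemma chain_snoc {Ω : Set (Pt n)} {r : ℝ} {k : ℕ} {a b c : Pt n}
    (h : chain Ω r k a b) (hc : c ∈ closure Ω) (hd : dist b c < r/2) :
    chain Ω r (k+1) a c :=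
  chain_concat h (chain_single hc hd)

lemma chain_pad {Ω : Set (Pt n)} {r : ℝ} (hr : 0 < r) {k : ℕ} {a b : Pt n}
    (h : chain Ω r k a b) (hb : b ∈ closure Ω) : chain Ω r (k+1) a b :=
  chain_snoc h hb (by simp; linarith)

lemma chain_le {Ω : Set (Pt n)} {r : ℝ} (hr : 0 < r) {k K : ℕ} (hkK : k ≤ K)
    {a b : Pt n} (h : chain Ω r k a b) (hb : b ∈ closure Ω) : chain Ω r K a b := by
  induction K with
  | zero => simpa [Nat.le_zero.mp hkK] using h
  | succ m ih =>
    rcases Nat.lt_or_ge k (m+1) with hlt | hge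
    · exact chain_pad hr (ih (Nat.lt_succ_iff.mp hlt)) hb
    · have : k = m + 1 := le_antisymm hkK hge
      subst this; exact h

lemma chain_reverse {Ω : Set (Pt n)} {r : ℝ} {k : ℕ} :
    ∀ {a b : Pt n}, a ∈ closure Ω → chain Ω r k a b → chain Ω r k b a := by
  induction k with
  | zero => intro a b _ h; exact (show a = b from h).symm
  | succ m ih =>
    intro a b ha h
    obtain ⟨w, hw, hd, hc⟩ := h
    exact chain_snoc (ih hw hc) ha (by rwa [dist_comm])

lemma chain_conn {Ω : Set (Pt n)} (hpc : IsPreconnected Ω) (hΩo : IsOpen Ω) {r : ℝ}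
    (hr : 0 < r) {x y : Pt n} (hx : x ∈ Ω) (hy : y ∈ Ω) : ∃ k, chain Ω r k x y := by
  by_contra hcon
  set A : Set (Pt n) := {z | z ∈ Ω ∧ ∃ k, chain Ω r k x z} with hA
  set U : Set (Pt n) := ⋃ z ∈ A, Metric.ball z (r/2) with hU
  set V : Set (Pt n) := ⋃ z ∈ Ω \ A, Metric.ball z (r/2) with hV
  have hUo : IsOpen U := isOpen_biUnion fun _ _ => Metric.isOpen_ball
  have hVo : IsOpen V := isOpen_biUnion fun _ _ => Metric.isOpen_ball
  have hstep : ∀ z ∈ A, ∀ z' ∈ Ω, dist z z' < r/2 → z' ∈ A := by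
    intro z hz z' hz' hd
    obtain ⟨hzΩ, k, hk⟩ := hz
    exact ⟨hz', k+1, chain_snoc hk (subset_closure hz') hd⟩
  have hsub : Ω ⊆ U ∪ V := by
    intro z hz
    by_cases h : z ∈ A
    · exact Or.inl (Set.mem_biUnion h (Metric.mem_ball_self (by linarith)))
    · exact Or.inr (Set.mem_biUnion ⟨hz, h⟩ (Metric.mem_ball_self (by linarith)))
  have hxA : x ∈ A := ⟨hx, 0, rfl⟩
  have hyV : y ∈ V := by
    refine Set.mem_biUnion ⟨hy, ?_⟩ (Metric.mem_ball_self (by linarith))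
    intro hyA
    exact hcon hyA.2
  obtain ⟨z, ⟨hzΩ, hzU, hzV⟩⟩ := hpc U V hUo hVo hsub
    ⟨x, hx, Set.mem_biUnion hxA (Metric.mem_ball_self (by linarith))⟩
    ⟨y, hy, hyV⟩
  obtain ⟨z1, hz1, hb1⟩ := Set.mem_iUnion₂.mp hzU
  obtain ⟨z2, hz2, hb2⟩ := Set.mem_iUnion₂.mp hzV
  have hzA : z ∈ A := hstep z1 hz1 z hzΩ (by rw [dist_comm]; exact Metric.mem_ball.mp hb1)
  have : z2 ∈ A := hstep z hzA z2 hz2.1 (Metric.mem_ball.mp hb2)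
  exact hz2.2 this

lemma setIntegral_le_sum_aux {ι : Type} [DecidableEq ι] (s : Finset ι) :
    ∀ (S : Set (Pt n)), MeasurableSet S →
    ∀ (B : ι → Set (Pt n)), (∀ i, MeasurableSet (B i)) →
    ∀ (f : Pt n → ℝ), IntegrableOn f S volume → (∀ x ∈ S, 0 ≤ f x) →
    S ⊆ (⋃ i ∈ s, B i) →
    (∫ x in S, f x) ≤ ∑ i ∈ s, ∫ x in S ∩ B i, f x := by
  induction s using Finset.induction_on with
  | empty =>
    intro S hS B hB f hf hnn hsub
    have : S = ∅ := by simpa using hsub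
    simp [this]
  | insert a s hins ih =>
    intro S hS B hB f hf hnn hsub
    have hSm : MeasurableSet (S \ B a) := hS.diff (hB a)
    have hdisj : Disjoint (S ∩ B a) (S \ B a) :=
      Set.disjoint_left.2 fun x hx1 hx2 => hx2.2 hx1.2
    have hunion : (S ∩ B a) ∪ (S \ B a) = S := Set.inter_union_diff S (B a)
    have heq : (∫ x in S, f x) = (∫ x in S ∩ B a, f x) + ∫ x in S \ B a, f x := by
      conv_lhs => rw [← hunion]
      exact setIntegral_union hdisj hSm (hf.mono_set Set.inter_subset_left)
        (hf.mono_set Set.diff_subset)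
    have hcov' : S \ B a ⊆ ⋃ i ∈ s, B i := by
      intro x hx
      have := hsub hx.1
      simp only [Finset.mem_insert, Set.mem_iUnion] at this ⊢
      obtain ⟨i, hi, hxi⟩ := this
      rcases hi with rfl | hi
      · exact absurd hxi hx.2
      · exact ⟨i, hi, hxi⟩
    have hih := ih (S \ B a) hSm B hB f (hf.mono_set Set.diff_subset)
      (fun x hx => hnn x hx.1) hcov'
    have hterm : ∀ i ∈ s, (∫ x in (S \ B a) ∩ B i, f x) ≤ ∫ x in S ∩ B i, f x := by
      intro i hi
      refine setIntegral_mono_set (hf.mono_set Set.inter_subset_left)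
        ?_ (HasSubset.Subset.eventuallyLE (by intro x hx; exact ⟨hx.1.1, hx.2⟩))
      exact (ae_restrict_iff' (hS.inter (hB i))).2 (ae_of_all _ fun x hx => hnn x hx.1)
    rw [heq, Finset.sum_insert hins]
    have := Finset.sum_le_sum hterm
    linarith [hih, this]

end Stmt9Aux


theorem stmt_9 {n : ℕ} (Ω : Set (Pt n)) (hΩ : IsBoundedDomain Ω)
    (r δ : ℝ) (hr : 0 < r) (hδ : 0 < δ)
    (u : Pt n → ℝ → ℝ)
    (hnn : ∀ x ∈ Ω, ∀ t : ℝ, 0 ≤ t → 0 ≤ u x t)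
    (hLinf : ∀ t : ℝ, 0 ≤ t → MemLp (fun x => u x t) ⊤ (volume.restrict Ω))
    (hderiv : ∀ x ∈ Ω, ∀ t : ℝ, 0 ≤ t →
      ∃ u' : ℝ, HasDerivWithinAt (u x) u' (Set.Ici 0) t ∧
        δ * (∫ y in Ω ∩ Metric.ball x r, u y t) ≤ u') :
    ∃ α : ℝ, 0 < α ∧ ∃ A₀ : ℝ, 0 < A₀ ∧
      ∀ t₀ : ℝ, 0 ≤ t₀ → ∀ t : ℝ, 0 < t → t < 1 → ∀ x ∈ Ω,
        A₀ * t ^ α * (∫ y in Ω, u y t₀) ≤ u x (t₀ + t) := by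
  classical
  obtain ⟨hopen, hconn, hbdd⟩ := hΩ
  have hΩmeas : MeasurableSet Ω := hopen.measurableSet
  have hΩfin : volume Ω < ⊤ := hbdd.measure_lt_top
  have hne : Ω.Nonempty := hconn.nonempty
  -- integrability
  have hint : ∀ s : ℝ, 0 ≤ s → IntegrableOn (fun y => u y s) Ω volume := by
    intro s hs
    haveI : Fact (volume Ω < ⊤) := ⟨hΩfin⟩
    exact (hLinf s hs).integrable le_top
  -- monotonicity in time
  have humono : ∀ x ∈ Ω, MonotoneOn (u x) (Set.Ici 0) := by
    intro x hx
    apply monotoneOn_of_deriv_nonneg (convex_Ici 0)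
    · intro s hs
      obtain ⟨u', hd, _⟩ := hderiv x hx s hs
      exact hd.continuousWithinAt
    · intro s hs
      rw [interior_Ici] at hs
      obtain ⟨u', hd, _⟩ := hderiv x hx s (le_of_lt hs)
      exact ((hd.hasDerivAt (Ici_mem_nhds hs)).differentiableAt).differentiableWithinAt
    · intro s hs
      rw [interior_Ici] at hs
      obtain ⟨u', hd, hge⟩ := hderiv x hx s (le_of_lt hs)
      rw [(hd.hasDerivAt (Ici_mem_nhds hs)).deriv]
      refine le_trans ?_ hge
      exact mul_nonneg hδ.le (setIntegral_nonneg (hΩmeas.inter measurableSet_ball)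
        fun y hy => hnn y hy.1 s hs.le)
  -- quantitative growth lemma
  have L1 : ∀ x ∈ Ω, ∀ s₀ : ℝ, 0 ≤ s₀ → ∀ t : ℝ, 0 < t →
      δ * (∫ y in Ω ∩ Metric.ball x r, u y s₀) * t ≤ u x (s₀ + t) := by
    intro x hx s₀ hs₀ t ht
    set M := δ * ∫ y in Ω ∩ Metric.ball x r, u y s₀ with hMdef
    have hM0 : 0 ≤ M := mul_nonneg hδ.le (setIntegral_nonneg
      (hΩmeas.inter measurableSet_ball) fun y hy => hnn y hy.1 s₀ hs₀)
    have key : MonotoneOn (fun s => u x s - M * s) (Set.Ici s₀) := by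
      apply monotoneOn_of_deriv_nonneg (convex_Ici s₀)
      · apply ContinuousOn.sub
        · intro s hs
          have hs' : (0:ℝ) ≤ s := le_trans hs₀ hs
          obtain ⟨u', hd, _⟩ := hderiv x hx s hs'
          exact (hd.continuousWithinAt).mono (Set.Ici_subset_Ici.mpr hs₀)
        · exact ((continuous_const.mul continuous_id).continuousOn)
      · intro s hs
        rw [interior_Ici] at hs
        have hs0 : (0:ℝ) < s := lt_of_le_of_lt hs₀ hs
        obtain ⟨u', hd, _⟩ := hderiv x hx s hs0.le
        have hda := hd.hasDerivAt (Ici_mem_nhds hs0)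
        exact ((hda.sub ((hasDerivAt_id s).const_mul M)).differentiableAt).differentiableWithinAt
      · intro s hs
        rw [interior_Ici] at hs
        have hs0 : (0:ℝ) < s := lt_of_le_of_lt hs₀ hs
        obtain ⟨u', hd, hge⟩ := hderiv x hx s hs0.le
        have hda := hd.hasDerivAt (Ici_mem_nhds hs0)
        have hMdr : HasDerivAt (fun s => u x s - M * s) (u' - M) s := by
          exact (hda.sub ((hasDerivAt_id s).const_mul M)).congr_deriv (by ring)
        rw [hMdr.deriv]
        have hmon : M ≤ δ * ∫ y in Ω ∩ Metric.ball x r, u y s := by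
          rw [hMdef]
          apply mul_le_mul_of_nonneg_left _ hδ.le
          apply setIntegral_mono_on ((hint s₀ hs₀).mono_set Set.inter_subset_left)
            ((hint s hs0.le).mono_set Set.inter_subset_left)
            (hΩmeas.inter measurableSet_ball)
          intro y hy
          exact humono y hy.1 hs₀ hs0.le (le_of_lt hs)
        linarith
    have h1 := key (Set.self_mem_Ici) (show s₀ + t ∈ Set.Ici s₀ by simp; linarith)
      (by linarith)
    have h2 : 0 ≤ u x s₀ := hnn x hx s₀ hs₀
    simp only at h1
    have : M * t ≤ u x (s₀ + t) := by nlinarith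
    calc δ * (∫ y in Ω ∩ Metric.ball x r, u y s₀) * t = M * t := by rw [hMdef]
      _ ≤ u x (s₀ + t) := this
  -- compactness: finite cover and volume lower bound
  have hcompact : IsCompact (closure Ω) :=
    Metric.isCompact_of_isClosed_isBounded isClosed_closure hbdd.closure
  obtain ⟨T, hTsub, hTcov⟩ := hcompact.elim_nhds_subcover
    (fun w => Metric.ball w (r/8)) (fun w _ => Metric.ball_mem_nhds w (by positivity))
  have hTne : T.Nonempty := by
    obtain ⟨x, hx⟩ := hne
    have := hTcov (subset_closure hx)
    rw [Set.mem_iUnion₂] at this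
    obtain ⟨w, hw, _⟩ := this
    exact ⟨w, hw⟩
  set f : Pt n → ℝ := fun w => (volume (Ω ∩ Metric.ball w (r/8))).toReal with hfdef
  have hvolfin : ∀ (A : Set (Pt n)), A ⊆ Ω → volume A ≠ ⊤ :=
    fun A hA => ne_of_lt (lt_of_le_of_lt (measure_mono hA) hΩfin)
  have hfpos : ∀ w ∈ closure Ω, 0 < f w := by
    intro w hw
    rw [Metric.mem_closure_iff] at hw
    obtain ⟨p, hp, hd⟩ := hw (r/8) (by positivity)
    have hnonempty : (Ω ∩ Metric.ball w (r/8)).Nonempty :=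
      ⟨p, hp, Metric.mem_ball.mpr (by rwa [dist_comm])⟩
    have hop : IsOpen (Ω ∩ Metric.ball w (r/8)) := hopen.inter Metric.isOpen_ball
    exact ENNReal.toReal_pos (ne_of_gt (hop.measure_pos volume hnonempty))
      (hvolfin _ Set.inter_subset_left)
  set c₀ : ℝ := T.inf' hTne f with hc₀def
  have hc₀pos : 0 < c₀ := by
    rw [hc₀def, Finset.lt_inf'_iff]
    exact fun w hw => hfpos w (hTsub w hw)
  have hc₀ : ∀ v ∈ closure Ω, c₀ ≤ (volume (Ω ∩ Metric.ball v (r/4))).toReal := by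
    intro v hv
    obtain ⟨w, hw, hb⟩ := Set.mem_iUnion₂.mp (hTcov hv)
    have hsub : Ω ∩ Metric.ball w (r/8) ⊆ Ω ∩ Metric.ball v (r/4) := by
      intro z hz
      refine ⟨hz.1, Metric.mem_ball.mpr ?_⟩
      have h1 : dist z w < r/8 := Metric.mem_ball.mp hz.2
      have h2 : dist v w < r/8 := Metric.mem_ball.mp hb
      calc dist z v ≤ dist z w + dist w v := dist_triangle z w v
        _ < r/4 := by rw [dist_comm w v]; linarith
    calc c₀ ≤ f w := Finset.inf'_le f hw
      _ ≤ _ := ENNReal.toReal_mono (hvolfin _ Set.inter_subset_left) (measure_mono hsub)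
  -- main chain induction
  have key : ∀ k : ℕ, ∃ c : ℝ, 0 < c ∧ ∀ w ∈ closure Ω, ∀ y : Pt n,
      Stmt9Aux.chain Ω r k w y →
      ∀ x ∈ Ω, dist x w < 3*r/4 → ∀ t₀ : ℝ, 0 ≤ t₀ → ∀ t : ℝ, 0 < t → t < 1 →
      c * t^(k+1) * (∫ z in Ω ∩ Metric.ball y (r/4), u z t₀) ≤ u x (t₀ + t) := by
    intro k
    induction k with
    | zero =>
      refine ⟨δ, hδ, ?_⟩
      intro w hw y hchain x hx hdist t₀ ht₀ t ht ht1
      have hwy : w = y := hchain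
      subst hwy
      have hsub : Ω ∩ Metric.ball w (r/4) ⊆ Ω ∩ Metric.ball x r := by
        intro z hz
        refine ⟨hz.1, Metric.mem_ball.mpr ?_⟩
        have h1 : dist z w < r/4 := Metric.mem_ball.mp hz.2
        calc dist z x ≤ dist z w + dist w x := dist_triangle z w x
          _ < r := by rw [dist_comm w x]; linarith
      have hmono : (∫ z in Ω ∩ Metric.ball w (r/4), u z t₀)
          ≤ ∫ z in Ω ∩ Metric.ball x r, u z t₀ := by
        refine setIntegral_mono_set ((hint t₀ ht₀).mono_set Set.inter_subset_left)
          ?_ (HasSubset.Subset.eventuallyLE hsub)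
        exact (ae_restrict_iff' (hΩmeas.inter measurableSet_ball)).2
          (ae_of_all _ fun z hz => hnn z hz.1 t₀ ht₀)
      calc δ * t^(0+1) * (∫ z in Ω ∩ Metric.ball w (r/4), u z t₀)
          = δ * (∫ z in Ω ∩ Metric.ball w (r/4), u z t₀) * t := by ring
        _ ≤ δ * (∫ z in Ω ∩ Metric.ball x r, u z t₀) * t :=
            mul_le_mul_of_nonneg_right (mul_le_mul_of_nonneg_left hmono hδ.le) ht.le
        _ ≤ u x (t₀ + t) := L1 x hx t₀ ht₀ t ht
    | succ k ih =>
      obtain ⟨c, hc, ihp⟩ := ih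
      refine ⟨δ * c₀ * c / 2^(k+2), by positivity, ?_⟩
      intro w hw y hchain x hx hdist t₀ ht₀ t ht ht1
      obtain ⟨w', hw', hdw, hch⟩ := hchain
      set V := ∫ z in Ω ∩ Metric.ball y (r/4), u z t₀ with hVdef
      have hV0 : 0 ≤ V := setIntegral_nonneg (hΩmeas.inter measurableSet_ball)
        fun z hz => hnn z hz.1 t₀ ht₀
      have ht2 : 0 < t/2 := by linarith
      have hs : 0 ≤ t₀ + t/2 := by linarith
      have hpt : ∀ y' ∈ Ω ∩ Metric.ball w (r/4),
          c * (t/2)^(k+1) * V ≤ u y' (t₀ + t/2) := by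
        intro y' hy'
        refine ihp w' hw' y hch y' hy'.1 ?_ t₀ ht₀ (t/2) ht2 (by linarith)
        have h1 : dist y' w < r/4 := Metric.mem_ball.mp hy'.2
        calc dist y' w' ≤ dist y' w + dist w w' := dist_triangle y' w w'
          _ < 3*r/4 := by linarith
      have hmeasb : MeasurableSet (Ω ∩ Metric.ball w (r/4)) :=
        hΩmeas.inter measurableSet_ball
      have hIB : (c * (t/2)^(k+1) * V) * (volume (Ω ∩ Metric.ball w (r/4))).toReal
          ≤ ∫ y' in Ω ∩ Metric.ball w (r/4), u y' (t₀ + t/2) :=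
        by
          have h := setIntegral_ge_of_const_le_real hmeasb (hvolfin _ Set.inter_subset_left) hpt
            ((hint _ hs).mono_set Set.inter_subset_left)
          exact h
      have hsub : Ω ∩ Metric.ball w (r/4) ⊆ Ω ∩ Metric.ball x r := by
        intro z hz
        refine ⟨hz.1, Metric.mem_ball.mpr ?_⟩
        have h1 : dist z w < r/4 := Metric.mem_ball.mp hz.2
        calc dist z x ≤ dist z w + dist w x := dist_triangle z w x
          _ < r := by rw [dist_comm w x]; linarith
      have hmono : (∫ y' in Ω ∩ Metric.ball w (r/4), u y' (t₀ + t/2))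
          ≤ ∫ y' in Ω ∩ Metric.ball x r, u y' (t₀ + t/2) := by
        refine setIntegral_mono_set ((hint _ hs).mono_set Set.inter_subset_left)
          ?_ (HasSubset.Subset.eventuallyLE hsub)
        exact (ae_restrict_iff' (hΩmeas.inter measurableSet_ball)).2
          (ae_of_all _ fun z hz => hnn z hz.1 _ hs)
      have hL := L1 x hx (t₀ + t/2) hs (t/2) ht2
      rw [show t₀ + t/2 + t/2 = t₀ + t by ring] at hL
      have hconst : (c * (t/2)^(k+1) * V) * c₀
          ≤ (c * (t/2)^(k+1) * V) * (volume (Ω ∩ Metric.ball w (r/4))).toReal :=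
        mul_le_mul_of_nonneg_left (hc₀ w hw) (by positivity)
      calc δ * c₀ * c / 2^(k+2) * t^(k+1+1) * V
          = δ * ((c * (t/2)^(k+1) * V) * c₀) * (t/2) := by
            rw [div_pow, pow_succ t (k+1), pow_succ (2:ℝ) (k+1)]
            field_simp
        _ ≤ δ * ((c * (t/2)^(k+1) * V) * (volume (Ω ∩ Metric.ball w (r/4))).toReal) * (t/2) :=
            mul_le_mul_of_nonneg_right (mul_le_mul_of_nonneg_left hconst hδ.le) ht2.le
        _ ≤ δ * (∫ y' in Ω ∩ Metric.ball w (r/4), u y' (t₀ + t/2)) * (t/2) :=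
            mul_le_mul_of_nonneg_right (mul_le_mul_of_nonneg_left hIB hδ.le) ht2.le
        _ ≤ δ * (∫ y' in Ω ∩ Metric.ball x r, u y' (t₀ + t/2)) * (t/2) :=
            mul_le_mul_of_nonneg_right (mul_le_mul_of_nonneg_left hmono hδ.le) ht2.le
        _ ≤ u x (t₀ + t) := hL
  -- uniform chain length
  obtain ⟨x₀, hx₀⟩ := hne
  have hsel : ∀ q ∈ T, ∃ p, p ∈ Ω ∧ dist p q < r/8 := by
    intro q hq
    have hq' := hTsub q hq
    rw [Metric.mem_closure_iff] at hq'
    obtain ⟨p, hp, hd⟩ := hq' (r/8) (by positivity)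
    exact ⟨p, hp, by rwa [dist_comm]⟩
  choose! p hpΩ hpd using hsel
  have hk : ∀ q ∈ T, ∃ k, Stmt9Aux.chain Ω r k x₀ (p q) :=
    fun q hq => Stmt9Aux.chain_conn hconn.isPreconnected hopen hr hx₀ (hpΩ q hq)
  choose! K hK using hk
  set N₁ := T.sup K with hN₁def
  have hchainN₁ : ∀ q ∈ T, Stmt9Aux.chain Ω r N₁ x₀ (p q) := by
    intro q hq
    exact Stmt9Aux.chain_le hr (Finset.le_sup hq) (hK q hq)
      (subset_closure (hpΩ q hq))
  set N := 1 + (N₁ + N₁) with hNdef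
  have hchainAll : ∀ x ∈ Ω, ∀ q ∈ T, Stmt9Aux.chain Ω r N x (p q) := by
    intro x hx q hq
    obtain ⟨q', hq', hb⟩ := Set.mem_iUnion₂.mp (hTcov (subset_closure hx))
    have h1 : Stmt9Aux.chain Ω r 1 x (p q') := by
      refine Stmt9Aux.chain_single (subset_closure (hpΩ q' hq')) ?_
      have ha : dist x q' < r/8 := Metric.mem_ball.mp hb
      have hb' : dist (p q') q' < r/8 := hpd q' hq'
      calc dist x (p q') ≤ dist x q' + dist q' (p q') := dist_triangle x q' (p q')
        _ < r/2 := by rw [dist_comm q' (p q')]; linarith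
    have h2 : Stmt9Aux.chain Ω r N₁ (p q') x₀ :=
      Stmt9Aux.chain_reverse (subset_closure hx₀) (hchainN₁ q' hq')
    exact Stmt9Aux.chain_concat h1 (Stmt9Aux.chain_concat h2 (hchainN₁ q hq))
  -- conclusion
  obtain ⟨c, hcpos, hkey⟩ := key N
  have hcardpos : (0:ℝ) < T.card := by
    exact_mod_cast Finset.card_pos.mpr hTne
  refine ⟨((N+1 : ℕ) : ℝ), by positivity, c / T.card, by positivity, ?_⟩
  intro t₀ ht₀ t ht ht1 x hx
  rw [Real.rpow_natCast]
  have hcover : Ω ⊆ ⋃ q ∈ T, Metric.ball (p q) (r/4) := by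
    intro z hz
    obtain ⟨q', hq', hb⟩ := Set.mem_iUnion₂.mp (hTcov (subset_closure hz))
    refine Set.mem_biUnion hq' (Metric.mem_ball.mpr ?_)
    have ha : dist z q' < r/8 := Metric.mem_ball.mp hb
    have hb' : dist (p q') q' < r/8 := hpd q' hq'
    calc dist z (p q') ≤ dist z q' + dist q' (p q') := dist_triangle z q' (p q')
      _ < r/4 := by rw [dist_comm q' (p q')]; linarith
  have hsum := Stmt9Aux.setIntegral_le_sum_aux T Ω hΩmeas
    (fun q => Metric.ball (p q) (r/4)) (fun q => measurableSet_ball)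
    (fun y => u y t₀) (hint t₀ ht₀) (fun z hz => hnn z hz t₀ ht₀) hcover
  have hmain : c * t^(N+1) * (∫ y in Ω, u y t₀) ≤ T.card * u x (t₀ + t) := by
    calc c * t^(N+1) * (∫ y in Ω, u y t₀)
        ≤ c * t^(N+1) * ∑ q ∈ T, ∫ z in Ω ∩ Metric.ball (p q) (r/4), u z t₀ :=
          mul_le_mul_of_nonneg_left hsum (by positivity)
      _ = ∑ q ∈ T, c * t^(N+1) * ∫ z in Ω ∩ Metric.ball (p q) (r/4), u z t₀ := by
          rw [Finset.mul_sum]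
      _ ≤ ∑ q ∈ T, u x (t₀ + t) := by
          refine Finset.sum_le_sum fun q hq => ?_
          refine hkey x (subset_closure hx) (p q) (hchainAll x hx q hq) x hx ?_
            t₀ ht₀ t ht ht1
          simp only [dist_self]
          linarith
      _ = T.card * u x (t₀ + t) := by rw [Finset.sum_const, nsmul_eq_mul]
  have hNcast : ((N+1 : ℕ) : ℝ) = ((N : ℕ) + 1 : ℕ) := by norm_num
  rw [div_mul_eq_mul_div, div_mul_eq_mul_div, div_le_iff₀ hcardpos]
  push_cast
  calc c * t ^ (N+1) * (∫ y in Ω, u y t₀) ≤ T.card * u x (t₀ + t) := hmain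
    _ = u x (t₀ + t) * T.card := by ring
end
end
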